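/- arXiv:2207.05639 — 3 statements merged into one kernel-verified Lean document; each statement's English description precedes it below -/
import Mathlib

section
/- There exist a constant c > 0 and an integer N such that for every n ≥ N, the positive co-degree Turán number of K₂,₂,₂ satisfies co⁺ex(n, K₂,₂,₂) ≥ c·n^{1/2}. -/
open Finset

/-- The co-degree of a vertex set `S` in the hypergraph with edge set `E`:
the number of edges containing `S`. -/
def coDeg {n : ℕ} (E : Finset (Finset (Fin n))) (S : Finset (Fin n)) : ℕ :=
  (E.filter (fun e => S ⊆ e)).card

/-- The minimum positive co-degree `δ⁺_{r-1}` of an `r`-graph on `Fin n` with edge set `E`: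
the largest `k` such that every `(r-1)`-set of vertices contained in at least one edge is
contained in at least `k` edges (i.e. the minimum of the positive co-degrees). -/
noncomputable def minPosCoDeg (r n : ℕ) (E : Finset (Finset (Fin n))) : ℕ :=
  sInf {d : ℕ | ∃ S : Finset (Fin n), S.card = r - 1 ∧ coDeg E S = d ∧ 0 < d}

/-- `E` contains a copy of `F`: an injection of the vertices of `F` mapping
edges of `F` to edges of `E`. -/
def Contains {α β : Type*} [DecidableEq α] [DecidableEq β]
    (F : Finset (Finset α)) (E : Finset (Finset β)) : Prop :=
  ∃ f : α → β, Function.Injective f ∧ ∀ e ∈ F, e.image f ∈ E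

/-- The positive co-degree Turán number `co⁺ex_r(n, F)`: the maximum of the minimum positive
co-degree over all `F`-free `r`-graphs on `n` vertices with at least one edge. -/
noncomputable def coPlusEx {α : Type*} [DecidableEq α] (r n : ℕ) (F : Finset (Finset α)) : ℕ :=
  sSup {d : ℕ | ∃ E : Finset (Finset (Fin n)),
    (∀ e ∈ E, e.card = r) ∧ E.Nonempty ∧ ¬ Contains F E ∧ minPosCoDeg r n E = d}


def K4minus : Finset (Finset (Fin 4)) := {{0,1,2}, {0,1,3}, {0,2,3}}

def K4 : Finset (Finset (Fin 4)) := {{0,1,2}, {0,1,3}, {0,2,3}, {1,2,3}}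

def F5 : Finset (Finset (Fin 5)) := {{0,1,2}, {0,1,3}, {2,3,4}}

def F32 : Finset (Finset (Fin 5)) := {{0,1,2}, {0,3,4}, {1,3,4}, {2,3,4}}

def Fano : Finset (Finset (Fin 7)) :=
  {{0,1,2}, {2,3,4}, {0,4,5}, {1,3,5}, {0,3,6}, {1,4,6}, {2,5,6}}

def F33 : Finset (Finset (Fin 6)) :=
  {{0,1,2}, {0,3,4}, {0,3,5}, {0,4,5}, {1,3,4}, {1,3,5}, {1,4,5}, {2,3,4}, {2,3,5}, {2,4,5}}

def C5 : Finset (Finset (Fin 5)) := {{0,1,2}, {1,2,3}, {2,3,4}, {0,3,4}, {0,1,4}}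

def C5minus : Finset (Finset (Fin 5)) := {{0,1,2}, {1,2,3}, {2,3,4}, {0,3,4}}

def K222 : Finset (Finset (Fin 6)) :=
  {{0,2,4}, {0,2,5}, {0,3,4}, {0,3,5}, {1,2,4}, {1,2,5}, {1,3,4}, {1,3,5}}

/-- `J k`: the 3-graph on `k+1` vertices whose edges are all triples containing the
distinguished vertex `0`. -/
def Jgraph (k : ℕ) : Finset (Finset (Fin (k+1))) :=
  (Finset.univ.powersetCard 3).filter (fun e => (0 : Fin (k+1)) ∈ e)

/-- `E` is (isomorphic to) the complete balanced `k`-partite 3-graph on `n` vertices: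
there is a partition of the vertices into `k` classes whose sizes differ by at most one,
such that the edges are exactly the triples of vertices in three pairwise distinct classes. -/
def IsCompleteBalancedMultipartite (n k : ℕ) (E : Finset (Finset (Fin n))) : Prop :=
  ∃ f : Fin n → Fin k,
    (∀ i j : Fin k, (Finset.univ.filter (fun v => f v = i)).card ≤
      (Finset.univ.filter (fun v => f v = j)).card + 1) ∧
    ∀ e : Finset (Fin n), e ∈ E ↔ (e.card = 3 ∧ (e.image f).card = 3)

/-- The unique (6,3,2)-design `H₆`. -/
def H6 : Finset (Finset (Fin 6)) :=
  {{0,1,2}, {0,1,3}, {2,3,4}, {2,3,5}, {0,4,5}, {1,4,5}, {0,2,4}, {0,3,5}, {1,2,5}, {1,3,4}}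

/-- `E` is (isomorphic to) a balanced blow-up of `H₆` on `n` vertices: the vertices are
partitioned into six classes of equal size, and the edges are exactly the triples whose
three vertices lie in classes forming an edge of `H₆`. -/
def IsBalancedH6Blowup (n : ℕ) (E : Finset (Finset (Fin n))) : Prop :=
  ∃ f : Fin n → Fin 6,
    (∀ i j : Fin 6, (Finset.univ.filter (fun v => f v = i)).card =
      (Finset.univ.filter (fun v => f v = j)).card) ∧
    ∀ e : Finset (Fin n), e ∈ E ↔ (e.card = 3 ∧ e.image f ∈ H6)


section Aux

lemma sum_triple {M : Type*} [AddCommMonoid M] [DecidableEq M] {x y z : M}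
    (hxy : x ≠ y) (hxz : x ≠ z) (hyz : y ≠ z) :
    ({x, y, z} : Finset M).sum id = x + y + z := by
  rw [Finset.sum_insert (by simp [hxy, hxz]), Finset.sum_insert (by simp [hyz]),
    Finset.sum_singleton]
  simp [add_assoc]

lemma card_triple {M : Type*} [DecidableEq M] {x y z : M}
    (hxy : x ≠ y) (hxz : x ≠ z) (hyz : y ≠ z) :
    ({x, y, z} : Finset M).card = 3 := by
  rw [Finset.card_insert_of_notMem (by simp [hxy, hxz]),
    Finset.card_insert_of_notMem (by simp [hyz]), Finset.card_singleton]

variable (q : ℕ)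

/-- The parabola map, giving a Sidon set in `ZMod q × ZMod q`. -/
def par (x : ZMod q) : ZMod q × ZMod q := (x, x ^ 2)

lemma par_injective : Function.Injective (par q) := fun _ _ h => congrArg Prod.fst h

variable [NeZero q]

/-- The Sidon set: the parabola. -/
def Sid : Finset (ZMod q × ZMod q) := Finset.univ.image (par q)

/-- The edge set: triples summing to a point of the Sidon set. -/
def EG : Finset (Finset (ZMod q × ZMod q)) :=
  (Finset.univ.powersetCard 3).filter (fun e => e.sum id ∈ Sid q)

lemma mem_EG {e : Finset (ZMod q × ZMod q)} :
    e ∈ EG q ↔ e.card = 3 ∧ e.sum id ∈ Sid q := by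
  simp [EG, Finset.mem_filter, Finset.mem_powersetCard_univ]

lemma myTwoNeZero (hq : q.Prime) (hq3 : 3 ≤ q) : (2 : ZMod q) ≠ 0 := by
  intro h
  have h2 : ((2 : ℕ) : ZMod q) = 0 := by exact_mod_cast h
  have := (ZMod.natCast_eq_zero_iff 2 q).mp h2
  have := Nat.le_of_dvd (by norm_num) this
  omega

lemma sidon (hq : q.Prime) (hq3 : 3 ≤ q) {a b c d : ZMod q × ZMod q}
    (ha : a ∈ Sid q) (hb : b ∈ Sid q) (hc : c ∈ Sid q) (hd : d ∈ Sid q)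
    (h : a + b = c + d) : a = c ∨ a = d := by
  haveI : Fact q.Prime := ⟨hq⟩
  obtain ⟨x, -, rfl⟩ := Finset.mem_image.mp ha
  obtain ⟨y, -, rfl⟩ := Finset.mem_image.mp hb
  obtain ⟨u, -, rfl⟩ := Finset.mem_image.mp hc
  obtain ⟨v, -, rfl⟩ := Finset.mem_image.mp hd
  simp only [par, Prod.mk_add_mk, Prod.mk.injEq] at h
  obtain ⟨h1, h2⟩ := h
  have hxy : x * y = u * v := by
    have h2' : (2 : ZMod q) * (x * y) = 2 * (u * v) := by
      linear_combination (x + y + u + v) * h1 - h2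
    exact mul_left_cancel₀ (myTwoNeZero q hq hq3) h2'
  have hz : (u - x) * (u - y) = 0 := by linear_combination (-u) * h1 + hxy
  rcases mul_eq_zero.mp hz with h' | h'
  · left
    have hux : u = x := by linear_combination h'
    subst hux; rfl
  · right
    have huy : u = y := by linear_combination h'
    have hvx : v = x := by linear_combination -h1 - h'
    subst hvx; rfl

lemma codeg_EG (a b : ZMod q × ZMod q) (hab : a ≠ b) :
    q - 2 ≤ ((EG q).filter (fun e => ({a, b} : Finset _) ⊆ e)).card := by
  classical
  set P : ZMod q → Prop := fun x => par q x - a - b ≠ a ∧ par q x - a - b ≠ b with hP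
  have hsplit := Finset.card_filter_add_card_filter_not
    (s := (Finset.univ : Finset (ZMod q))) (p := P)
  have hbad : (Finset.univ.filter (fun x => ¬ P x)).card ≤ 2 := by
    have : (Finset.univ.filter (fun x => ¬ P x)).card ≤ (Finset.univ : Finset (Fin 2)).card := by
      apply Finset.card_le_card_of_injOn
        (fun x => if par q x - a - b = a then (0 : Fin 2) else 1)
      · intro x _; exact Finset.mem_univ _
      · intro x hx y hy hxy
        simp only [Finset.mem_coe, Finset.mem_filter, hP, not_and_or, not_not] at hx hy
        by_cases hxa : par q x - a - b = a
        · by_cases hya : par q y - a - b = a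
          · exact par_injective q (by linear_combination hxa - hya)
          · simp [hxa, hya] at hxy
        · by_cases hya : par q y - a - b = a
          · simp [hxa, hya] at hxy
          · have hxb : par q x - a - b = b := by tauto
            have hyb : par q y - a - b = b := by tauto
            exact par_injective q (by linear_combination hxb - hyb)
    simpa using this
  have hgood : q - 2 ≤ (Finset.univ.filter P).card := by
    have hcard : (Finset.univ : Finset (ZMod q)).card = q := by
      simp [ZMod.card]
    omega
  refine le_trans hgood ?_
  apply Finset.card_le_card_of_injOn (fun x => {a, b, par q x - a - b})
  · intro x hx
    simp only [Finset.mem_coe, Finset.mem_filter, hP] at hx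
    obtain ⟨-, hxa, hxb⟩ := hx
    have hax : a ≠ par q x - a - b := fun h => hxa h.symm
    have hbx : b ≠ par q x - a - b := fun h => hxb h.symm
    simp only [Finset.mem_coe, Finset.mem_filter]
    refine ⟨(mem_EG q).mpr ⟨card_triple hab hax hbx, ?_⟩, ?_⟩
    · rw [sum_triple hab hax hbx]
      have : a + b + (par q x - a - b) = par q x := by ring
      rw [this]
      exact Finset.mem_image.mpr ⟨x, Finset.mem_univ _, rfl⟩
    · intro w hw
      simp only [Finset.mem_insert, Finset.mem_singleton] at hw ⊢
      tauto
  · intro x hx y hy hxy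
    simp only [Finset.mem_coe, Finset.mem_filter, hP] at hx hy
    obtain ⟨-, hxa, hxb⟩ := hx
    obtain ⟨-, hya, hyb⟩ := hy
    have hax : a ≠ par q x - a - b := fun h => hxa h.symm
    have hbx : b ≠ par q x - a - b := fun h => hxb h.symm
    have hay : a ≠ par q y - a - b := fun h => hya h.symm
    have hby : b ≠ par q y - a - b := fun h => hyb h.symm
    have hsum : ({a, b, par q x - a - b} : Finset _).sum id
        = ({a, b, par q y - a - b} : Finset _).sum id :=
      congrArg (fun s => Finset.sum s id) hxy
    rw [sum_triple hab hax hbx, sum_triple hab hay hby] at hsum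
    exact par_injective q (by linear_combination hsum)

lemma not_contains_EG (hq : q.Prime) (hq3 : 3 ≤ q) : ¬ Contains K222 (EG q) := by
  rintro ⟨f, hf, hE⟩
  have hne : ∀ i j : Fin 6, i ≠ j → f i ≠ f j := fun i j hij h => hij (hf h)
  have key : ∀ i j k : Fin 6, ({i, j, k} : Finset (Fin 6)) ∈ K222 → i ≠ j → i ≠ k → j ≠ k →
      f i + f j + f k ∈ Sid q := by
    intro i j k hmem hij hik hjk
    have := hE _ hmem
    have himg : ({i, j, k} : Finset (Fin 6)).image f = {f i, f j, f k} := by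
      simp [Finset.image_insert]
    rw [himg] at this
    have := ((mem_EG q).mp this).2
    rwa [sum_triple (hne i j hij) (hne i k hik) (hne j k hjk)] at this
  have h1 : f 0 + f 2 + f 4 ∈ Sid q := key 0 2 4 (by decide) (by decide) (by decide) (by decide)
  have h2 : f 1 + f 3 + f 4 ∈ Sid q := key 1 3 4 (by decide) (by decide) (by decide) (by decide)
  have h3 : f 1 + f 2 + f 4 ∈ Sid q := key 1 2 4 (by decide) (by decide) (by decide) (by decide)
  have h4 : f 0 + f 3 + f 4 ∈ Sid q := key 0 3 4 (by decide) (by decide) (by decide) (by decide)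
  have hsum : (f 0 + f 2 + f 4) + (f 1 + f 3 + f 4) = (f 1 + f 2 + f 4) + (f 0 + f 3 + f 4) := by
    ring
  rcases sidon q hq hq3 h1 h2 h3 h4 hsum with h | h
  · exact hne 0 1 (by decide) (by linear_combination h)
  · exact hne 2 3 (by decide) (by linear_combination h)

end Aux

lemma main_construction (q n : ℕ) (hq : q.Prime) (hq3 : 3 ≤ q) (hqn : q * q ≤ n) :
    (q - 2 : ℕ) ≤ coPlusEx 3 n K222 := by
  classical
  haveI : NeZero q := ⟨hq.ne_zero⟩
  haveI : Fact (1 < q) := ⟨by omega⟩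
  -- an embedding of the group into Fin n
  have hcard : Fintype.card (ZMod q × ZMod q) ≤ Fintype.card (Fin n) := by
    simpa [ZMod.card] using hqn
  obtain ⟨ι⟩ := Function.Embedding.nonempty_of_card_le hcard
  set E' : Finset (Finset (Fin n)) := (EG q).image (fun e => e.image ι) with hE'
  -- co-degree transfer
  have himgfilter : ∀ t : Finset (ZMod q × ZMod q),
      E'.filter (fun e => t.image ι ⊆ e)
        = ((EG q).filter (fun e => t ⊆ e)).image (fun e => e.image ι) := by
    intro t
    rw [hE', Finset.filter_image]
    congr 1
    apply Finset.filter_congr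
    intro e _
    exact Finset.image_subset_image_iff ι.injective
  have himginj : Function.Injective (fun e : Finset (ZMod q × ZMod q) => e.image ι) :=
    Finset.image_injective ι.injective
  have hcodeg : ∀ t : Finset (ZMod q × ZMod q), coDeg E' (t.image ι)
      = ((EG q).filter (fun e => t ⊆ e)).card := by
    intro t
    rw [coDeg, himgfilter, Finset.card_image_of_injective _ himginj]
  -- basic pair
  have hone : ((1 : ZMod q), (0 : ZMod q)) ≠ ((0 : ZMod q), (0 : ZMod q)) := by
    simp only [ne_eq, Prod.mk.injEq, not_and]
    intro h; exact absurd h one_ne_zero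
  have hbase := codeg_EG q _ _ hone
  have hbasepos : 0 < ((EG q).filter
      (fun e => ({((1 : ZMod q), (0 : ZMod q)), ((0 : ZMod q), (0 : ZMod q))} : Finset _) ⊆ e)).card := by
    omega
  -- E' is a 3-graph
  have hE'3 : ∀ e ∈ E', e.card = 3 := by
    intro e he
    obtain ⟨e₀, he₀, rfl⟩ := Finset.mem_image.mp he
    rw [Finset.card_image_of_injective _ ι.injective]
    exact ((mem_EG q).mp he₀).1
  -- E' is nonempty
  have hE'ne : E'.Nonempty := by
    obtain ⟨e, he⟩ := Finset.card_pos.mp hbasepos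
    exact ⟨e.image ι, Finset.mem_image.mpr ⟨e, (Finset.mem_filter.mp he).1, rfl⟩⟩
  -- E' is K222-free
  have hfree : ¬ Contains K222 E' := by
    rintro ⟨f, hf, hEf⟩
    apply not_contains_EG q hq hq3
    have hrange : ∀ i : Fin 6, ∃ x : ZMod q × ZMod q, ι x = f i := by
      intro i
      have : ∃ t ∈ K222, i ∈ t := by revert i; decide
      obtain ⟨t, ht, hit⟩ := this
      have := hEf t ht
      obtain ⟨e₀, he₀, heq⟩ := Finset.mem_image.mp this
      have : f i ∈ e₀.image ι := heq ▸ Finset.mem_image_of_mem f hit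
      obtain ⟨x, -, hx⟩ := Finset.mem_image.mp this
      exact ⟨x, hx⟩
    choose g hg using hrange
    refine ⟨g, ?_, ?_⟩
    · intro i j hij
      apply hf
      rw [← hg i, ← hg j, hij]
    · intro t ht
      have := hEf t ht
      obtain ⟨e₀, he₀, heq⟩ := Finset.mem_image.mp this
      have himg : (t.image g).image ι = e₀.image ι := by
        rw [Finset.image_image]
        rw [show (ι ∘ g) = f from funext fun i => hg i] at *
        exact heq.symm
      rwa [himginj himg]
  -- min positive co-degree is at least q - 2
  set D : Set ℕ := {d : ℕ | ∃ S : Finset (Fin n), S.card = 3 - 1 ∧ coDeg E' S = d ∧ 0 < d}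
    with hD
  have hDne : D.Nonempty := by
    refine ⟨coDeg E' (({((1 : ZMod q), (0 : ZMod q)), ((0 : ZMod q), (0 : ZMod q))} :
      Finset (ZMod q × ZMod q)).image ι), _, ?_, rfl, ?_⟩
    · rw [Finset.card_image_of_injective _ ι.injective]
      simp [hone]
    · rw [hcodeg]; omega
  have hDge : ∀ d ∈ D, q - 2 ≤ d := by
    rintro d ⟨S, hS2, hSd, hdpos⟩
    have : ∃ e ∈ E', S ⊆ e := by
      by_contra h
      push_neg at h
      have : E'.filter (fun e => S ⊆ e) = ∅ := by
        apply Finset.filter_eq_empty_iff.mpr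
        intro e he; exact h e he
      rw [coDeg, this] at hSd
      simp at hSd; omega
    obtain ⟨e, he, hSe⟩ := this
    obtain ⟨e₀, he₀, rfl⟩ := Finset.mem_image.mp he
    obtain ⟨t, hte, htS⟩ := Finset.subset_image_iff.mp hSe
    have ht2 : t.card = 2 := by
      rw [← htS, Finset.card_image_of_injective _ ι.injective] at hS2
      exact hS2
    obtain ⟨a, b, hab, rfl⟩ := Finset.card_eq_two.mp ht2
    rw [← hSd, ← htS, hcodeg]
    exact codeg_EG q a b hab
  have hmin : q - 2 ≤ minPosCoDeg 3 n E' := by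
    rw [minPosCoDeg, ← hD]
    exact le_csInf hDne hDge
  -- conclude via sSup
  have hmem : minPosCoDeg 3 n E' ∈ {d : ℕ | ∃ E : Finset (Finset (Fin n)),
      (∀ e ∈ E, e.card = 3) ∧ E.Nonempty ∧ ¬ Contains K222 E ∧ minPosCoDeg 3 n E = d} :=
    ⟨E', hE'3, hE'ne, hfree, rfl⟩
  have hbdd : BddAbove {d : ℕ | ∃ E : Finset (Finset (Fin n)),
      (∀ e ∈ E, e.card = 3) ∧ E.Nonempty ∧ ¬ Contains K222 E ∧ minPosCoDeg 3 n E = d} := by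
    refine ⟨Fintype.card (Finset (Fin n)), ?_⟩
    rintro d ⟨E, -, -, -, rfl⟩
    rw [minPosCoDeg]
    set DE : Set ℕ := {d : ℕ | ∃ S : Finset (Fin n), S.card = 3 - 1 ∧ coDeg E S = d ∧ 0 < d}
    by_cases hne : DE.Nonempty
    · obtain ⟨S, -, hSd, -⟩ := Nat.sInf_mem hne
      rw [← hSd, coDeg]
      exact le_trans (Finset.card_le_card (Finset.filter_subset _ _)) (Finset.card_le_univ E)
    · rw [Set.not_nonempty_iff_eq_empty.mp hne, Nat.sInf_empty]
      exact Nat.zero_le _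
  calc (q - 2 : ℕ) ≤ minPosCoDeg 3 n E' := hmin
    _ ≤ coPlusEx 3 n K222 := le_csSup hbdd hmem

/-- There are a constant `c > 0` and an integer `N` such that
`co⁺ex(n, K₂,₂,₂) ≥ c·n^(1/2)` for all `n ≥ N`. -/
theorem coPlusEx_K222_lower :
    ∃ c : ℝ, 0 < c ∧ ∃ N : ℕ, ∀ n : ℕ, N ≤ n →
      c * (n : ℝ) ^ ((1 : ℝ) / 2) ≤ (coPlusEx 3 n K222 : ℝ) := by
  refine ⟨1/8, by norm_num, 100, ?_⟩
  intro n hn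
  set m := Nat.sqrt n with hm
  have hms : m * m ≤ n := by simpa [pow_two] using Nat.sqrt_le' n
  have hns : n < (m + 1) * (m + 1) := by simpa [pow_two, Nat.succ_eq_add_one] using Nat.lt_succ_sqrt' n
  have hm10 : 10 ≤ m := Nat.le_sqrt.mpr (by omega)
  obtain ⟨q, hq, hq1, hq2⟩ := Nat.exists_prime_lt_and_le_two_mul (m / 2) (by omega)
  have hq3 : 3 ≤ q := by omega
  have hqm : q ≤ m := by omega
  have hqsq : q * q ≤ n := le_trans (Nat.mul_le_mul hqm hqm) hms
  have key : (q - 2 : ℕ) ≤ coPlusEx 3 n K222 := main_construction q n hq hq3 hqsq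
  have h2q : m + 1 ≤ 2 * q := by omega
  have hsqrt : ((n : ℝ)) ^ ((1 : ℝ) / 2) = Real.sqrt n := (Real.sqrt_eq_rpow _).symm
  have hsle : Real.sqrt n ≤ (m : ℝ) + 1 := by
    have h1 : (n : ℝ) ≤ ((m : ℝ) + 1) ^ 2 := by
      have h2 : ((n : ℕ) : ℝ) ≤ (((m + 1) * (m + 1) : ℕ) : ℝ) := Nat.cast_le.mpr hns.le
      push_cast at h2
      nlinarith [h2]
    calc Real.sqrt n ≤ Real.sqrt (((m : ℝ) + 1) ^ 2) := Real.sqrt_le_sqrt h1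
      _ = (m : ℝ) + 1 := Real.sqrt_sq (by positivity)
  have hcast : ((q - 2 : ℕ) : ℝ) = (q : ℝ) - 2 := by
    have h2le : 2 ≤ q := by omega
    push_cast [Nat.cast_sub h2le]
    ring
  have hfinal : (1/8 : ℝ) * ((m : ℝ) + 1) ≤ (q : ℝ) - 2 := by
    have h2q' : (m : ℝ) + 1 ≤ 2 * q := by exact_mod_cast h2q
    have hm10' : (10 : ℝ) ≤ m := by exact_mod_cast hm10
    linarith
  calc (1/8 : ℝ) * (n : ℝ) ^ ((1 : ℝ)/2) = (1/8) * Real.sqrt n := by rw [hsqrt]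
    _ ≤ (1/8) * ((m : ℝ) + 1) := by linarith
    _ ≤ (q : ℝ) - 2 := hfinal
    _ = ((q - 2 : ℕ) : ℝ) := hcast.symm
    _ ≤ _ := Nat.cast_le.mpr key
end

section
/- Let F be a 3-graph with at least one edge. If F is 3-partite, then there exist constants ε > 0 and C > 0 such that co⁺ex(n, F) ≤ C·n^{1−ε} for all n ≥ 3. If F is not 3-partite, then co⁺ex(n, F) ≥ ⌊n/3⌋ for all n ≥ 3; in particular co⁺ex(n, F) = Θ(n) in this case. -/
open Finset

def elink {n : ℕ} (E : Finset (Finset (Fin n))) (S : Finset (Fin n)) : Finset (Fin n) :=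
  univ.filter (fun v => v ∉ S ∧ insert v S ∈ E)

lemma mem_elink {n : ℕ} {E : Finset (Finset (Fin n))} {S : Finset (Fin n)} {v : Fin n} :
    v ∈ elink E S ↔ v ∉ S ∧ insert v S ∈ E := by simp [elink]

lemma coDeg_le_card_elink {n : ℕ} {E : Finset (Finset (Fin n))} (h3 : ∀ e ∈ E, e.card = 3)
    {S : Finset (Fin n)} (hS : S.card = 2) : coDeg E S ≤ (elink E S).card := by
  classical
  rcases (E.filter (fun e => S ⊆ e)).eq_empty_or_nonempty with h | ⟨e₀, he₀⟩
  · simp [coDeg, h]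
  have hv₀ : (Fin n) := by
    have : e₀.Nonempty := by
      rw [← Finset.card_pos, h3 e₀ (Finset.mem_filter.1 he₀).1]; norm_num
    exact this.choose
  have key : ∀ e ∈ E.filter (fun e => S ⊆ e), (e \ S).Nonempty := by
    intro e he
    rw [Finset.mem_filter] at he
    rw [← Finset.card_pos, Finset.card_sdiff_of_subset he.2, h3 e he.1, hS]; norm_num
  have hins : ∀ e (he : e ∈ E.filter (fun e => S ⊆ e)),
      insert ((e \ S).min' (key e he)) S = e := by
    intro e he
    have hm := Finset.min'_mem (e \ S) (key e he)
    rw [Finset.mem_sdiff] at hm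
    have hme := Finset.mem_filter.1 he
    apply Finset.eq_of_subset_of_card_le
    · exact Finset.insert_subset hm.1 hme.2
    · rw [h3 e hme.1, Finset.card_insert_of_notMem hm.2, hS]
  set f : Finset (Fin n) → Fin n :=
    fun e => if h : e ∈ E.filter (fun e => S ⊆ e) then (e \ S).min' (key e h) else hv₀ with hf
  apply Finset.card_le_card_of_injOn f
  · intro e he
    rw [Finset.mem_coe] at he ⊢
    rw [hf]
    simp only [he, dif_pos]
    have hm := Finset.min'_mem (e \ S) (key e he)
    rw [Finset.mem_sdiff] at hm
    rw [mem_elink]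
    exact ⟨hm.2, by rw [hins e he]; exact (Finset.mem_filter.1 he).1⟩
  · intro e he e' he' heq
    simp only [hf, Finset.mem_coe] at he he' heq
    rw [dif_pos he, dif_pos he'] at heq
    rw [← hins e he, ← hins e' he', heq]

lemma coDeg_le_n {n : ℕ} {E : Finset (Finset (Fin n))} (h3 : ∀ e ∈ E, e.card = 3)
    {S : Finset (Fin n)} (hS : S.card = 2) : coDeg E S ≤ n := by
  calc coDeg E S ≤ (elink E S).card := coDeg_le_card_elink h3 hS
    _ ≤ (univ : Finset (Fin n)).card := Finset.card_le_card (Finset.filter_subset _ _)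
    _ = n := by simp

lemma minPos_setNonempty {n : ℕ} {E : Finset (Finset (Fin n))} (h3 : ∀ e ∈ E, e.card = 3)
    (hne : E.Nonempty) :
    {d : ℕ | ∃ S : Finset (Fin n), S.card = 3 - 1 ∧ coDeg E S = d ∧ 0 < d}.Nonempty := by
  obtain ⟨e, he⟩ := hne
  obtain ⟨S, hSe, hS⟩ := Finset.exists_subset_card_eq (show 2 ≤ e.card by rw [h3 e he]; norm_num)
  refine ⟨coDeg E S, S, hS, rfl, ?_⟩
  rw [coDeg, Finset.card_pos]
  exact ⟨e, Finset.mem_filter.2 ⟨he, hSe⟩⟩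

lemma minPos_mem {n : ℕ} {E : Finset (Finset (Fin n))} (h3 : ∀ e ∈ E, e.card = 3)
    (hne : E.Nonempty) : ∃ S : Finset (Fin n), S.card = 2 ∧
      coDeg E S = minPosCoDeg 3 n E ∧ 0 < minPosCoDeg 3 n E :=
  Nat.sInf_mem (minPos_setNonempty h3 hne)

lemma minPos_le {n : ℕ} {E : Finset (Finset (Fin n))} {S : Finset (Fin n)}
    (hS : S.card = 2) (hpos : 0 < coDeg E S) : minPosCoDeg 3 n E ≤ coDeg E S :=
  Nat.sInf_le ⟨S, hS, rfl, hpos⟩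

lemma minPos_le_n {n : ℕ} {E : Finset (Finset (Fin n))} (h3 : ∀ e ∈ E, e.card = 3)
    (hne : E.Nonempty) : minPosCoDeg 3 n E ≤ n := by
  obtain ⟨S, hS, hd, _⟩ := minPos_mem h3 hne
  rw [← hd]
  exact coDeg_le_n h3 hS

lemma elink_card_ge {n : ℕ} {E : Finset (Finset (Fin n))} (h3 : ∀ e ∈ E, e.card = 3)
    {S : Finset (Fin n)} (hS : S.card = 2) (hpos : 0 < coDeg E S) :
    minPosCoDeg 3 n E ≤ (elink E S).card :=
  (minPos_le hS hpos).trans (coDeg_le_card_elink h3 hS)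

/-- generic exchange + pigeonhole lemma -/
lemma exists_common_superset {n s : ℕ} {ι : Type*} [DecidableEq ι]
    (I : Finset ι) (J : ι → Finset (Fin n)) (hs : s ≤ n) :
    ∃ T : Finset (Fin n), T.card = s ∧
      (∑ i ∈ I, ((J i).powersetCard s).card) ≤
        (I.filter (fun i => T ⊆ J i)).card * n.choose s := by
  classical
  set 𝒮 := (univ : Finset (Fin n)).powersetCard s with h𝒮
  have hcard : 𝒮.card = n.choose s := by
    rw [h𝒮, Finset.card_powersetCard, Finset.card_univ, Fintype.card_fin]
  have hSne : 𝒮.Nonempty := by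
    rw [← Finset.card_pos, hcard]
    exact Nat.choose_pos hs
  have hswap : (∑ i ∈ I, ((J i).powersetCard s).card) =
      ∑ T ∈ 𝒮, (I.filter (fun i => T ⊆ J i)).card := by
    have h1 : ∀ i, (J i).powersetCard s = 𝒮.filter (fun T => T ⊆ J i) := by
      intro i
      ext T
      simp only [Finset.mem_powersetCard, h𝒮, Finset.mem_filter]
      constructor
      · rintro ⟨h1, h2⟩; exact ⟨⟨Finset.subset_univ T, h2⟩, h1⟩
      · rintro ⟨⟨_, h2⟩, h1⟩; exact ⟨h1, h2⟩
    calc (∑ i ∈ I, ((J i).powersetCard s).card)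
        = ∑ i ∈ I, ∑ T ∈ 𝒮, (if T ⊆ J i then 1 else 0) := by
          refine Finset.sum_congr rfl fun i _ => ?_
          rw [h1 i, Finset.card_filter]
      _ = ∑ T ∈ 𝒮, ∑ i ∈ I, (if T ⊆ J i then 1 else 0) := Finset.sum_comm
      _ = ∑ T ∈ 𝒮, (I.filter (fun i => T ⊆ J i)).card := by
          refine Finset.sum_congr rfl fun T _ => ?_
          rw [Finset.card_filter]
  obtain ⟨T, hT, hmax⟩ := 𝒮.exists_max_image (fun T => (I.filter (fun i => T ⊆ J i)).card) hSne
  refine ⟨T, ?_, ?_⟩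
  · exact (Finset.mem_powersetCard.1 hT).2
  · rw [hswap]
    calc ∑ T' ∈ 𝒮, (I.filter (fun i => T' ⊆ J i)).card
        ≤ 𝒮.card * (I.filter (fun i => T ⊆ J i)).card := by
          rw [← smul_eq_mul]
          exact Finset.sum_le_card_nsmul _ _ _ fun x hx => hmax x hx
      _ = (I.filter (fun i => T ⊆ J i)).card * n.choose s := by rw [hcard, mul_comm]

/-- ratio monotonicity of binomial coefficients -/
lemma choose_ratio {s D x : ℕ} (hsD : s ≤ D) (hDx : D ≤ x) (hs : 1 ≤ s) :
    D.choose s * x ≤ x.choose s * D := by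
  obtain ⟨c, rfl⟩ : ∃ c, s = c + 1 := ⟨s - 1, by omega⟩
  obtain ⟨b, rfl⟩ : ∃ b, D = b + 1 := ⟨D - 1, by omega⟩
  obtain ⟨a, rfl⟩ : ∃ a, x = a + 1 := ⟨x - 1, by omega⟩
  have h1 : (a + 1) * a.choose c = (a + 1).choose (c + 1) * (c + 1) :=
    Nat.add_one_mul_choose_eq a c
  have h2 : (b + 1) * b.choose c = (b + 1).choose (c + 1) * (c + 1) :=
    Nat.add_one_mul_choose_eq b c
  have hmono : b.choose c ≤ a.choose c := Nat.choose_le_choose c (by omega)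
  have key : (b + 1).choose (c + 1) * (a + 1) * (c + 1) ≤
      (a + 1).choose (c + 1) * (b + 1) * (c + 1) := by
    calc (b + 1).choose (c + 1) * (a + 1) * (c + 1)
        = ((b + 1).choose (c + 1) * (c + 1)) * (a + 1) := by ring
      _ = ((b + 1) * b.choose c) * (a + 1) := by rw [h2]
      _ ≤ ((b + 1) * a.choose c) * (a + 1) := by
          exact Nat.mul_le_mul_right _ (Nat.mul_le_mul_left _ hmono)
      _ = ((a + 1) * a.choose c) * (b + 1) := by ring
      _ = (a + 1).choose (c + 1) * (b + 1) * (c + 1) := by rw [h1]; ring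
  exact Nat.le_of_mul_le_mul_right key (Nat.succ_pos c)

lemma pow_cancel {a b k : ℕ} (hk : k ≠ 0) (h : a^k ≤ b^k) : a ≤ b :=
  (Nat.pow_le_pow_iff_left hk).1 h

lemma key_numeric {n s d g : ℕ} (hs : 1 ≤ s) (hn1 : 1 ≤ n) (hd2s : 2*s ≤ d) (hdn : d ≤ n)
    (HYP : 2^(s*s+3*s) * s^s * n^(s*(s+2)-1) ≤ d^(s*(s+2)))
    (main1 : d*d*d.choose s ≤ 2 * g * n.choose s) :
    4*s*n ≤ g ∧ s * n.choose s ≤ n * (g/n).choose s := by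
  have hfac : 0 < s.factorial := Nat.factorial_pos s
  have hd1 : 1 ≤ d := by omega
  -- c2 : d^(s+2) ≤ 2^(s+1) * g * n^s
  have hB1 : (d + 1 - s)^s ≤ s.factorial * d.choose s := by
    rw [← Nat.descFactorial_eq_factorial_mul_choose]
    exact Nat.pow_sub_le_descFactorial d s
  have hB2 : s.factorial * n.choose s ≤ n^s := by
    rw [← Nat.descFactorial_eq_factorial_mul_choose]
    exact Nat.descFactorial_le_pow n s
  have hdub : d^s ≤ 2^s * (d+1-s)^s := by
    rw [← Nat.mul_pow]
    exact Nat.pow_le_pow_left (by omega) s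
  have c2 : d^(s+2) ≤ 2^(s+1) * g * n^s := by
    have h1 : d*d*(d+1-s)^s * s.factorial ≤ 2*g*n^s * s.factorial := by
      calc d*d*(d+1-s)^s * s.factorial = d*d*((d+1-s)^s * s.factorial) := by ring
        _ ≤ d*d*(s.factorial * d.choose s * s.factorial) := by
            exact Nat.mul_le_mul_left _ (Nat.mul_le_mul_right _ hB1)
        _ = (d*d*d.choose s) * s.factorial * s.factorial := by ring
        _ ≤ (2*g*n.choose s) * s.factorial * s.factorial := by
            exact Nat.mul_le_mul_right _ (Nat.mul_le_mul_right _ (by linarith [main1]))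
        _ = 2*g*(s.factorial * n.choose s) * s.factorial := by ring
        _ ≤ 2*g*n^s * s.factorial := by
            exact Nat.mul_le_mul_right _ (Nat.mul_le_mul_left _ hB2)
    have h2 : d*d*(d+1-s)^s ≤ 2*g*n^s := Nat.le_of_mul_le_mul_right h1 hfac
    calc d^(s+2) = d*d*d^s := by ring
      _ ≤ d*d*(2^s * (d+1-s)^s) := Nat.mul_le_mul_left _ hdub
      _ = 2^s * (d*d*(d+1-s)^s) := by ring
      _ ≤ 2^s * (2*g*n^s) := Nat.mul_le_mul_left _ h2
      _ = 2^(s+1) * g * n^s := by ring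
  -- c3' : 2^(s+3)*s*n^(s+1) ≤ d^(s+2)
  have c3' : 2^(s+3)*s*n^(s+1) ≤ d^(s+2) := by
    apply pow_cancel (show s ≠ 0 by omega)
    rw [← Nat.pow_mul]
    calc (2^(s+3)*s*n^(s+1))^s = 2^((s+3)*s) * s^s * n^((s+1)*s) := by
          rw [Nat.mul_pow, Nat.mul_pow, ← Nat.pow_mul, ← Nat.pow_mul]
      _ ≤ 2^(s*s+3*s) * s^s * n^(s*(s+2)-1) := by
          have h1 : (s+3)*s = s*s+3*s := by ring
          have h2 : (s+1)*s ≤ s*(s+2)-1 := by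
            have e1 : s*(s+2) = s*s + 2*s := by ring
            have e2 : (s+1)*s = s*s + s := by ring
            omega
          rw [h1]
          exact Nat.mul_le_mul_left _ (Nat.pow_le_pow_right hn1 h2)
      _ ≤ d^(s*(s+2)) := HYP
      _ = (d^(s+2))^s := by rw [← Nat.pow_mul, Nat.mul_comm]
      _ = d^((s+2)*s) := by rw [← Nat.pow_mul]
  -- c3 : 4*s*n ≤ g
  have c3 : 4*s*n ≤ g := by
    have h1 : 2^(s+1)*(4*s*n)*n^s ≤ 2^(s+1)*g*n^s := by
      calc 2^(s+1)*(4*s*n)*n^s = 2^(s+3)*s*n^(s+1) := by ring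
        _ ≤ d^(s+2) := c3'
        _ ≤ 2^(s+1)*g*n^s := c2
    have h2 : (4*s*n) * (2^(s+1)*n^s) ≤ g * (2^(s+1)*n^s) := by
      calc (4*s*n) * (2^(s+1)*n^s) = 2^(s+1)*(4*s*n)*n^s := by ring
        _ ≤ 2^(s+1)*g*n^s := h1
        _ = g * (2^(s+1)*n^s) := by ring
    exact Nat.le_of_mul_le_mul_right h2 (by positivity)
  refine ⟨c3, ?_⟩
  set D := g / n with hD
  have hsD : s ≤ D := by
    rw [hD, Nat.le_div_iff_mul_le hn1]
    nlinarith
  -- c5 : g ≤ 4*n*(D+1-s)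
  have c5 : g ≤ 4*(n*(D+1-s)) := by
    have h0 : n * D + g % n = g := by rw [hD]; exact Nat.div_add_mod g n
    have h0' : g % n < n := Nat.mod_lt g (show 0 < n by omega)
    have hC : (D+1-s) + s = D + 1 := by omega
    have hCe : n*(D+1-s) + n*s = n*D + n := by
      rw [← Nat.mul_add, hC, Nat.mul_add, Nat.mul_one]
    have hns : n ≤ n*s := Nat.le_mul_of_pos_right n (by omega)
    have hns' : s*n = n*s := Nat.mul_comm s n
    have hc3' : 4*s*n = 4*(s*n) := by ring
    omega
  -- H2' : s * n.choose s ≤ n * D.choose s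
  have g_pow : 2^(2*s)*s^s*n^(2*s-1) ≤ g^s := by
    have h1 : (d^(s+2))^s ≤ (2^(s+1)*g*n^s)^s := Nat.pow_le_pow_left c2 s
    have h2 : 2^(s*s+3*s) * s^s * n^(s*(s+2)-1) ≤ 2^(s*s+s) * g^s * n^(s*s) := by
      calc 2^(s*s+3*s) * s^s * n^(s*(s+2)-1) ≤ d^(s*(s+2)) := HYP
        _ = (d^(s+2))^s := by rw [← Nat.pow_mul, Nat.mul_comm]
        _ ≤ (2^(s+1)*g*n^s)^s := h1
        _ = 2^((s+1)*s) * g^s * n^(s*s) := by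
            rw [Nat.mul_pow, Nat.mul_pow, ← Nat.pow_mul, ← Nat.pow_mul]
        _ = 2^(s*s+s) * g^s * n^(s*s) := by ring_nf
    have h3 : (2^(2*s)*s^s*n^(2*s-1)) * (2^(s*s+s) * n^(s*s)) ≤
        g^s * (2^(s*s+s) * n^(s*s)) := by
      calc (2^(2*s)*s^s*n^(2*s-1)) * (2^(s*s+s) * n^(s*s))
          = 2^(2*s+(s*s+s)) * s^s * n^((2*s-1)+s*s) := by
            rw [Nat.pow_add 2, Nat.pow_add n]; ring
        _ = 2^(s*s+3*s) * s^s * n^(s*(s+2)-1) := by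
            congr 2
            · congr 1; ring
            · congr 1; have : s*(s+2) = s*s+2*s := by ring
              omega
        _ ≤ 2^(s*s+s) * g^s * n^(s*s) := h2
        _ = g^s * (2^(s*s+s) * n^(s*s)) := by ring
    exact Nat.le_of_mul_le_mul_right h3 (by positivity)
  have key_pow : s*n^s ≤ n*(D+1-s)^s := by
    have h1 : g^s ≤ 2^(2*s) * n^s * (D+1-s)^s := by
      calc g^s ≤ (4*(n*(D+1-s)))^s := Nat.pow_le_pow_left c5 s
        _ = 2^(2*s) * n^s * (D+1-s)^s := by
          rw [Nat.mul_pow, Nat.mul_pow, show (4:ℕ) = 2^2 by norm_num, ← Nat.pow_mul]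
          ring
    have h2 : 2^(2*s)*(s^s*n^(2*s-1)) ≤ 2^(2*s)*(n^s*(D+1-s)^s) := by
      calc 2^(2*s)*(s^s*n^(2*s-1)) = 2^(2*s)*s^s*n^(2*s-1) := by ring
        _ ≤ g^s := g_pow
        _ ≤ 2^(2*s) * n^s * (D+1-s)^s := h1
        _ = 2^(2*s)*(n^s*(D+1-s)^s) := by ring
    have h3 : s^s*n^(2*s-1) ≤ n^s*(D+1-s)^s := Nat.le_of_mul_le_mul_left h2 (by positivity)
    have h4 : (s*n^s) * n^(s-1) ≤ (n*(D+1-s)^s) * n^(s-1) := by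
      calc (s*n^s) * n^(s-1) = s * n^(s+(s-1)) := by rw [Nat.pow_add]; ring
        _ = s * n^(2*s-1) := by rw [show s + (s-1) = 2*s-1 by omega]
        _ ≤ s^s*n^(2*s-1) := by
            exact Nat.mul_le_mul_right _ (Nat.le_self_pow (by omega) s)
        _ ≤ n^s*(D+1-s)^s := h3
        _ = (n*(D+1-s)^s) * n^(s-1) := by
            rw [show n^s = n * n^(s-1) by rw [← Nat.pow_succ']; congr 1; omega]; ring
    exact Nat.le_of_mul_le_mul_right h4 (by positivity)
  have hB1' : (D + 1 - s)^s ≤ s.factorial * D.choose s := by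
    rw [← Nat.descFactorial_eq_factorial_mul_choose]
    exact Nat.pow_sub_le_descFactorial D s
  have final : (s * n.choose s) * s.factorial ≤ (n * D.choose s) * s.factorial := by
    calc (s * n.choose s) * s.factorial = s * (s.factorial * n.choose s) := by ring
      _ ≤ s * n^s := Nat.mul_le_mul_left _ hB2
      _ ≤ n*(D+1-s)^s := key_pow
      _ ≤ n*(s.factorial * D.choose s) := Nat.mul_le_mul_left _ hB1'
      _ = (n * D.choose s) * s.factorial := by ring
  exact Nat.le_of_mul_le_mul_right final hfac

lemma key_Ksss {n s : ℕ} (hs : 1 ≤ s) {E : Finset (Finset (Fin n))}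
    (h3 : ∀ e ∈ E, e.card = 3) (hne : E.Nonempty)
    (HYP : 2^(s*s+3*s) * s^s * n^(s*(s+2)-1) ≤ (minPosCoDeg 3 n E)^(s*(s+2))) :
    ∃ X Y Z : Finset (Fin n), X.card = s ∧ Y.card = s ∧ Z.card = s ∧
      Disjoint X Y ∧ Disjoint X Z ∧ Disjoint Y Z ∧
      ∀ x ∈ X, ∀ y ∈ Y, ∀ z ∈ Z, ({x, y, z} : Finset (Fin n)) ∈ E := by
  classical
  set d := minPosCoDeg 3 n E with hd
  obtain ⟨S₀, hS₀card, hS₀deg, hdpos⟩ := minPos_mem h3 hne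
  have hd1 : 1 ≤ d := hdpos
  have hdn : d ≤ n := minPos_le_n h3 hne
  have hn1 : 1 ≤ n := hd1.trans hdn
  -- basic numeric bounds
  have hMd : 2^(s*s+3*s) * s^s ≤ d := by
    have hK1 : 1 ≤ s*(s+2) - 1 := by
      have : s*(s+2) = s*s+2*s := by ring
      omega
    have h1 : (2^(s*s+3*s) * s^s) * d^(s*(s+2)-1) ≤ d * d^(s*(s+2)-1) := by
      calc (2^(s*s+3*s) * s^s) * d^(s*(s+2)-1) ≤ (2^(s*s+3*s) * s^s) * n^(s*(s+2)-1) :=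
            Nat.mul_le_mul_left _ (Nat.pow_le_pow_left hdn _)
        _ ≤ d^(s*(s+2)) := HYP
        _ = d * d^(s*(s+2)-1) := by
            rw [← Nat.pow_succ']
            congr 1
            omega
    exact Nat.le_of_mul_le_mul_right h1 (by positivity)
  have hd2s : 2*s ≤ d := by
    refine le_trans ?_ hMd
    have h1 : s ≤ s^s := Nat.le_self_pow (by omega) s
    have h2 : 2 ≤ 2^(s*s+3*s) := by
      calc (2:ℕ) = 2^1 := rfl
        _ ≤ 2^(s*s+3*s) := Nat.pow_le_pow_right (by norm_num) (by nlinarith)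
    calc 2*s ≤ 2^(s*s+3*s) * s := Nat.mul_le_mul_right _ h2
      _ ≤ 2^(s*s+3*s) * s^s := Nat.mul_le_mul_left _ h1
  have hsn : s ≤ n := by
    refine le_trans (le_trans ?_ hd2s) hdn
    omega
  -- the apex pair
  obtain ⟨x, y, hxy, hS₀⟩ := Finset.card_eq_two.1 hS₀card
  have hL₀ : d ≤ (elink E S₀).card := by
    refine elink_card_ge h3 hS₀card ?_
    omega
  -- the index family I
  set I : Finset (Fin n × Fin n) :=
    (elink E S₀).biUnion (fun w => (elink E {x, w}).image (fun v => (w, v))) with hI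
  have hlink_xw : ∀ w ∈ elink E S₀, d ≤ (elink E {x, w}).card := by
    intro w hw
    rw [mem_elink, hS₀] at hw
    have hxw : ({x, w} : Finset (Fin n)).card = 2 := by
      rw [Finset.card_insert_of_notMem (by simp; intro h; exact hw.1 (by simp [h])),
        Finset.card_singleton]
    refine elink_card_ge h3 hxw ?_
    rw [coDeg, Finset.card_pos]
    refine ⟨insert w {x, y}, Finset.mem_filter.2 ⟨hw.2, ?_⟩⟩
    intro a ha
    simp only [Finset.mem_insert, Finset.mem_singleton] at ha ⊢
    tauto
  have hI_mem : ∀ p ∈ I, p.2 ≠ p.1 ∧ 0 < coDeg E {p.1, p.2} ∧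
      ({p.1, p.2} : Finset (Fin n)).card = 2 := by
    intro p hp
    rw [hI, Finset.mem_biUnion] at hp
    obtain ⟨w, hw, hp⟩ := hp
    rw [Finset.mem_image] at hp
    obtain ⟨v, hv, rfl⟩ := hp
    rw [mem_elink] at hv
    have hvw : v ≠ w := by
      intro h; exact hv.1 (by simp [h])
    refine ⟨hvw, ?_, ?_⟩
    · rw [coDeg, Finset.card_pos]
      refine ⟨insert v {x, w}, Finset.mem_filter.2 ⟨hv.2, ?_⟩⟩
      intro a ha
      simp only [Finset.mem_insert, Finset.mem_singleton] at ha ⊢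
      tauto
    · rw [Finset.card_insert_of_notMem (by simp [hvw.symm]), Finset.card_singleton]
  have hIcard : d*d ≤ I.card := by
    rw [hI, Finset.card_biUnion]
    · calc d*d ≤ (elink E S₀).card * d := Nat.mul_le_mul_right _ hL₀
        _ = ∑ _w ∈ elink E S₀, d := by rw [Finset.sum_const, smul_eq_mul]
        _ ≤ ∑ w ∈ elink E S₀, ((elink E {x, w}).image (fun v => (w, v))).card := by
            refine Finset.sum_le_sum fun w hw => ?_
            rw [Finset.card_image_of_injective _ (fun a b h => (Prod.ext_iff.1 h).2)]
            exact hlink_xw w hw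
    · intro a _ b _ hab
      simp only [Finset.disjoint_left, Finset.mem_image]
      rintro p ⟨v, _, rfl⟩ ⟨v', _, h⟩
      exact hab (congrArg Prod.fst h).symm
  -- Round 1 pigeonhole
  obtain ⟨S, hScard, hSineq⟩ :=
    exists_common_superset I (fun p => elink E {p.1, p.2}) hsn
  set G₀ := I.filter (fun p => S ⊆ elink E {p.1, p.2}) with hG₀
  have main0 : d*d*(d.choose s) ≤ G₀.card * n.choose s := by
    calc d*d*(d.choose s) ≤ I.card * d.choose s := Nat.mul_le_mul_right _ hIcard
      _ = ∑ _p ∈ I, d.choose s := by rw [Finset.sum_const, smul_eq_mul]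
      _ ≤ ∑ p ∈ I, ((elink E {p.1, p.2}).powersetCard s).card := by
          refine Finset.sum_le_sum fun p hp => ?_
          rw [Finset.card_powersetCard]
          refine Nat.choose_le_choose s ?_
          obtain ⟨_, hpos, hcard2⟩ := hI_mem p hp
          exact elink_card_ge h3 hcard2 hpos
      _ ≤ G₀.card * n.choose s := hSineq
  -- the graph Gp
  set Gp := G₀.image (fun p => ({p.1, p.2} : Finset (Fin n))) with hGp
  have hGp_mem : ∀ q ∈ Gp, q.card = 2 ∧ S ⊆ elink E q := by
    intro q hq
    rw [hGp, Finset.mem_image] at hq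
    obtain ⟨p, hp, rfl⟩ := hq
    rw [hG₀, Finset.mem_filter] at hp
    exact ⟨(hI_mem p hp.1).2.2, hp.2⟩
  have hG₀Gp : G₀.card ≤ 2 * Gp.card := by
    rw [Finset.card_eq_sum_card_fiberwise
      (f := fun p => ({p.1, p.2} : Finset (Fin n))) (t := Gp)
      (fun p hp => Finset.mem_image_of_mem _ hp)]
    calc ∑ q ∈ Gp, (G₀.filter (fun p => ({p.1, p.2} : Finset (Fin n)) = q)).card
        ≤ ∑ _q ∈ Gp, 2 := by
          refine Finset.sum_le_sum fun q hq => ?_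
          rw [hGp, Finset.mem_image] at hq
          obtain ⟨p₀, _, rfl⟩ := hq
          have hsub : G₀.filter (fun p => ({p.1, p.2} : Finset (Fin n)) = {p₀.1, p₀.2}) ⊆
              ({(p₀.1, p₀.2), (p₀.2, p₀.1)} : Finset (Fin n × Fin n)) := by
            intro p hp
            rw [Finset.mem_filter] at hp
            obtain ⟨hpG, hpq⟩ := hp
            have hne12 : p.2 ≠ p.1 := (hI_mem p (Finset.mem_filter.1 hpG).1).1
            have h1 : p.1 ∈ ({p₀.1, p₀.2} : Finset (Fin n)) := by
              rw [← hpq]; simp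
            have h2 : p.2 ∈ ({p₀.1, p₀.2} : Finset (Fin n)) := by
              rw [← hpq]; simp
            have h3 : p₀.1 ∈ ({p.1, p.2} : Finset (Fin n)) := by
              rw [hpq]; simp
            have h4 : p₀.2 ∈ ({p.1, p.2} : Finset (Fin n)) := by
              rw [hpq]; simp
            simp only [Finset.mem_insert, Finset.mem_singleton] at h1 h2 h3 h4 ⊢
            rcases h1 with h1 | h1 <;> rcases h2 with h2 | h2
            · exact absurd (h2.trans h1.symm) hne12
            · left; rw [Prod.ext_iff]; exact ⟨h1, h2⟩
            · right; rw [Prod.ext_iff]; exact ⟨h1, h2⟩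
            · exact absurd (h2.trans h1.symm) hne12
          calc (G₀.filter (fun p => ({p.1, p.2} : Finset (Fin n)) = {p₀.1, p₀.2})).card
              ≤ ({(p₀.1, p₀.2), (p₀.2, p₀.1)} : Finset (Fin n × Fin n)).card :=
                Finset.card_le_card hsub
            _ ≤ 2 := Finset.card_insert_le _ _ |>.trans (by simp)
      _ = 2 * Gp.card := by rw [Finset.sum_const, smul_eq_mul, Nat.mul_comm]
  set g := Gp.card with hg
  have main1 : d*d*(d.choose s) ≤ 2 * g * n.choose s := by
    calc d*d*(d.choose s) ≤ G₀.card * n.choose s := main0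
      _ ≤ (2*g) * n.choose s := Nat.mul_le_mul_right _ hG₀Gp
  -- neighbourhoods
  set N : Fin n → Finset (Fin n) :=
    fun a => univ.filter (fun b => b ≠ a ∧ ({a, b} : Finset (Fin n)) ∈ Gp) with hN
  have hNsum : 2*g ≤ ∑ a, (N a).card := by
    set U : Finset (Fin n × Fin n) :=
      univ.biUnion (fun a => (N a).image (fun b => (a, b))) with hU
    have hUcard : U.card = ∑ a, (N a).card := by
      rw [hU, Finset.card_biUnion]
      · exact Finset.sum_congr rfl fun a _ =>
          Finset.card_image_of_injective _ (fun b b' h => (Prod.ext_iff.1 h).2)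
      · intro a _ b _ hab
        simp only [Finset.disjoint_left, Finset.mem_image]
        rintro p ⟨v, _, rfl⟩ ⟨v', _, h⟩
        exact hab (congrArg Prod.fst h).symm
    have hUmem : ∀ p ∈ U, ({p.1, p.2} : Finset (Fin n)) ∈ Gp := by
      intro p hp
      rw [hU, Finset.mem_biUnion] at hp
      obtain ⟨a, _, hp⟩ := hp
      rw [Finset.mem_image] at hp
      obtain ⟨b, hb, rfl⟩ := hp
      rw [hN] at hb
      simp only [Finset.mem_filter] at hb
      exact hb.2.2
    rw [← hUcard, Finset.card_eq_sum_card_fiberwise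
      (f := fun p => ({p.1, p.2} : Finset (Fin n))) (t := Gp) (fun p hp => hUmem p hp)]
    calc 2*g = ∑ _q ∈ Gp, 2 := by rw [Finset.sum_const, smul_eq_mul, Nat.mul_comm]
      _ ≤ ∑ q ∈ Gp, (U.filter (fun p => ({p.1, p.2} : Finset (Fin n)) = q)).card := by
        refine Finset.sum_le_sum fun q hq => ?_
        obtain ⟨hq2, _⟩ := hGp_mem q hq
        obtain ⟨u, v, huv, rfl⟩ := Finset.card_eq_two.1 hq2
        have h1 : (u, v) ∈ U.filter (fun p => ({p.1, p.2} : Finset (Fin n)) = {u, v}) := by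
          rw [Finset.mem_filter, hU, Finset.mem_biUnion]
          refine ⟨⟨u, Finset.mem_univ u, Finset.mem_image_of_mem _ ?_⟩, rfl⟩
          rw [hN, Finset.mem_filter]
          exact ⟨Finset.mem_univ v, huv.symm, hq⟩
        have h2 : (v, u) ∈ U.filter (fun p => ({p.1, p.2} : Finset (Fin n)) = {u, v}) := by
          rw [Finset.mem_filter, hU, Finset.mem_biUnion]
          refine ⟨⟨v, Finset.mem_univ v, Finset.mem_image_of_mem _ ?_⟩, ?_⟩
          · rw [hN, Finset.mem_filter]
            refine ⟨Finset.mem_univ u, huv, ?_⟩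
            rw [Finset.pair_comm]; exact hq
          · rw [Finset.pair_comm]
        calc 2 = ({(u,v), (v,u)} : Finset (Fin n × Fin n)).card := by
              rw [Finset.card_insert_of_notMem (by simp [Prod.ext_iff]; intro h; exact absurd h huv),
                Finset.card_singleton]
          _ ≤ _ := Finset.card_le_card (by
              intro p hp
              simp only [Finset.mem_insert, Finset.mem_singleton] at hp
              rcases hp with rfl | rfl
              · exact h1
              · exact h2)
  -- numeric consequences
  obtain ⟨hc3, hH2⟩ := key_numeric hs hn1 hd2s hdn HYP main1
  set D := g / n with hD
  have hsD : s ≤ D := by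
    rw [hD, Nat.le_div_iff_mul_le hn1]
    nlinarith
  have hnD : n*D ≤ g := by
    rw [hD, Nat.mul_comm]; exact Nat.div_mul_le_self g n
  -- Round 2
  obtain ⟨T, hTcard, hTineq⟩ := exists_common_superset (univ : Finset (Fin n)) N hsn
  set A := univ.filter (fun a => T ⊆ N a) with hA
  have hhi : D.choose s * g ≤ D * ∑ a, ((N a).powersetCard s).card := by
    set Hi := univ.filter (fun a : Fin n => D ≤ (N a).card) with hHi
    have r1 : g ≤ ∑ a ∈ Hi, (N a).card := by
      have hsplit : ∑ a ∈ Hi, (N a).card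
          + ∑ a ∈ univ.filter (fun a => ¬ D ≤ (N a).card), (N a).card = ∑ a, (N a).card :=
        Finset.sum_filter_add_sum_filter_not _ _ _
      have hlow : ∑ a ∈ univ.filter (fun a => ¬ D ≤ (N a).card), (N a).card ≤ n*D := by
        calc ∑ a ∈ univ.filter (fun a => ¬ D ≤ (N a).card), (N a).card
            ≤ (univ.filter (fun a : Fin n => ¬ D ≤ (N a).card)).card * D := by
              rw [← smul_eq_mul]
              exact Finset.sum_le_card_nsmul _ _ _ fun a ha => by
                have := (Finset.mem_filter.1 ha).2
                omega
          _ ≤ n * D := by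
              refine Nat.mul_le_mul_right _ ?_
              calc (univ.filter (fun a : Fin n => ¬ D ≤ (N a).card)).card
                  ≤ (univ : Finset (Fin n)).card := Finset.card_le_card (Finset.filter_subset _ _)
                _ = n := by simp
      omega
    calc D.choose s * g ≤ D.choose s * ∑ a ∈ Hi, (N a).card := Nat.mul_le_mul_left _ r1
      _ = ∑ a ∈ Hi, D.choose s * (N a).card := by rw [Finset.mul_sum]
      _ ≤ ∑ a ∈ Hi, ((N a).card.choose s) * D := by
          refine Finset.sum_le_sum fun a ha => ?_
          exact choose_ratio hsD (Finset.mem_filter.1 ha).2 hs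
      _ = D * ∑ a ∈ Hi, (N a).card.choose s := by rw [← Finset.sum_mul, Nat.mul_comm]
      _ ≤ D * ∑ a, (N a).card.choose s := by
          refine Nat.mul_le_mul_left _ ?_
          exact Finset.sum_le_sum_of_subset (Finset.filter_subset _ _)
      _ = D * ∑ a, ((N a).powersetCard s).card := by
          congr 1
          exact Finset.sum_congr rfl fun a _ => (Finset.card_powersetCard _ _).symm
  have main2 : n * D.choose s ≤ A.card * n.choose s := by
    have h1 : (n * D.choose s) * D ≤ (A.card * n.choose s) * D := by
      calc (n * D.choose s) * D = D.choose s * (n * D) := by ring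
        _ ≤ D.choose s * g := Nat.mul_le_mul_left _ hnD
        _ ≤ D * ∑ a, ((N a).powersetCard s).card := hhi
        _ ≤ D * (A.card * n.choose s) := Nat.mul_le_mul_left _ hTineq
        _ = (A.card * n.choose s) * D := by ring
    exact Nat.le_of_mul_le_mul_right h1 (by omega)
  have hsA : s ≤ A.card := by
    have h1 : s * n.choose s ≤ A.card * n.choose s := le_trans hH2 main2
    exact Nat.le_of_mul_le_mul_right h1 (Nat.choose_pos hsn)
  obtain ⟨Z, hZA, hZcard⟩ := Finset.exists_subset_card_eq hsA
  have hTne : T.Nonempty := Finset.card_pos.mp (by omega)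
  have hZne : Z.Nonempty := Finset.card_pos.mp (by omega)
  have hedge : ∀ a ∈ A, ∀ b ∈ T, ({a, b} : Finset (Fin n)) ∈ Gp ∧ b ≠ a := by
    intro a ha b hb
    rw [hA, Finset.mem_filter] at ha
    have hb' := ha.2 hb
    rw [hN, Finset.mem_filter] at hb'
    exact ⟨hb'.2.2, hb'.2.1⟩
  refine ⟨S, T, Z, hScard, hTcard, hZcard, ?_, ?_, ?_, ?_⟩
  · rw [Finset.disjoint_left]
    intro c hcS hcT
    obtain ⟨a, haZ⟩ := hZne
    obtain ⟨hq, _⟩ := hedge a (hZA haZ) c hcT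
    have := (hGp_mem _ hq).2 hcS
    rw [mem_elink] at this
    exact this.1 (by simp)
  · rw [Finset.disjoint_left]
    intro c hcS hcZ
    obtain ⟨b, hbT⟩ := hTne
    obtain ⟨hq, _⟩ := hedge c (hZA hcZ) b hbT
    have := (hGp_mem _ hq).2 hcS
    rw [mem_elink] at this
    exact this.1 (by simp)
  · rw [Finset.disjoint_left]
    intro c hcT hcZ
    exact absurd rfl (hedge c (hZA hcZ) c hcT).2
  · intro x' hx' y' hy' z' hz'
    obtain ⟨hq, _⟩ := hedge z' (hZA hz') y' hy'
    have hx'' := (hGp_mem _ hq).2 hx'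
    rw [mem_elink] at hx''
    have : ({x', y', z'} : Finset (Fin n)) = insert x' {z', y'} := by
      rw [Finset.pair_comm y' z']
    rw [this]
    exact hx''.2

lemma exists_injOn_mapsTo {β γ : Type*} [DecidableEq β] [Nonempty γ]
    (s : Finset β) (t : Finset γ) (h : s.card ≤ t.card) :
    ∃ g : β → γ, Set.InjOn g ↑s ∧ ∀ a ∈ s, g a ∈ t := by
  classical
  obtain ⟨t', ht', hcard⟩ := Finset.exists_subset_card_eq h
  have e : (s : Finset β) ≃ (t' : Finset γ) := Finset.equivOfCardEq hcard.symm
  refine ⟨fun a => if h : a ∈ s then (e ⟨a, h⟩ : γ) else Classical.arbitrary γ, ?_, ?_⟩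
  · intro a ha b hb hab
    rw [Finset.mem_coe] at ha hb
    simp only [dif_pos ha, dif_pos hb] at hab
    have := e.injective (Subtype.ext hab)
    exact congrArg Subtype.val this
  · intro a ha
    simp only [dif_pos ha]
    exact ht' (e ⟨a, ha⟩).2

lemma contains_of_Ksss {α : Type} [Fintype α] [DecidableEq α] {n : ℕ} (hn : 0 < n)
    (F : Finset (Finset α)) (hcard : ∀ e ∈ F, e.card = 3)
    (f : α → Fin 3) (hf : ∀ e ∈ F, (e.image f).card = 3)
    {E : Finset (Finset (Fin n))} {X Y Z : Finset (Fin n)}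
    (hX : X.card = Fintype.card α) (hY : Y.card = Fintype.card α)
    (hZ : Z.card = Fintype.card α)
    (hXY : Disjoint X Y) (hXZ : Disjoint X Z) (hYZ : Disjoint Y Z)
    (hE : ∀ x ∈ X, ∀ y ∈ Y, ∀ z ∈ Z, ({x, y, z} : Finset (Fin n)) ∈ E) :
    Contains F E := by
  classical
  have : Nonempty (Fin n) := ⟨⟨0, hn⟩⟩
  set P : Fin 3 → Finset (Fin n) := ![X, Y, Z] with hP
  have hPcard : ∀ i : Fin 3, (univ.filter (fun a : α => f a = i)).card ≤ (P i).card := by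
    intro i
    have h1 : (univ.filter (fun a : α => f a = i)).card ≤ Fintype.card α := by
      calc _ ≤ (univ : Finset α).card := Finset.card_le_card (Finset.filter_subset _ _)
        _ = Fintype.card α := Finset.card_univ
    refine h1.trans ?_
    fin_cases i <;> simp [hP, hX, hY, hZ]
  have hGex : ∀ i : Fin 3, ∃ g : α → Fin n,
      Set.InjOn g ↑(univ.filter (fun a : α => f a = i)) ∧
      ∀ a ∈ univ.filter (fun a : α => f a = i), g a ∈ P i :=
    fun i => exists_injOn_mapsTo _ _ (hPcard i)
  choose g hginj hgmap using hGex
  set h : α → Fin n := fun a => g (f a) a with hh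
  have hP0 : P 0 = X := rfl
  have hP1 : P 1 = Y := rfl
  have hP2 : P 2 = Z := rfl
  have hPdisj : ∀ i j : Fin 3, i ≠ j → Disjoint (P i) (P j) := by
    intro i j hij
    fin_cases i <;> fin_cases j <;>
      first
        | exact absurd rfl hij
        | exact hXY | exact hXZ | exact hYZ
        | exact hXY.symm | exact hXZ.symm | exact hYZ.symm
  have hmem : ∀ a : α, h a ∈ P (f a) := by
    intro a
    exact hgmap (f a) a (by simp)
  have hinj : Function.Injective h := by
    intro a b hab
    have hfab : f a = f b := by
      by_contra hne
      exact (Finset.disjoint_left.1 (hPdisj _ _ hne) (hmem a)) (hab ▸ hmem b)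
    rw [hh] at hab
    simp only at hab
    rw [hfab] at hab
    exact hginj (f b) (by simp [hfab]) (by simp) hab
  refine ⟨h, hinj, ?_⟩
  intro e he
  obtain ⟨a, b, c, hab, hac, hbc, rfl⟩ := Finset.card_eq_three.1 (hcard e he)
  have himg : ({a, b, c} : Finset α).image h = {h a, h b, h c} := by
    simp [Finset.image_insert]
  rw [himg]
  have hfimg : ({a, b, c} : Finset α).image f = {f a, f b, f c} := by
    simp [Finset.image_insert]
  have hf3 : ({f a, f b, f c} : Finset (Fin 3)).card = 3 := by
    rw [← hfimg]; exact hf _ he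
  have hfab : f a ≠ f b := by
    intro hq
    have : ({f a, f b, f c} : Finset (Fin 3)) = {f b, f c} := by
      rw [hq]; simp
    rw [this] at hf3
    have := Finset.card_insert_le (f b) ({f c} : Finset (Fin 3))
    simp at this
    omega
  have hfac : f a ≠ f c := by
    intro hq
    have : ({f a, f b, f c} : Finset (Fin 3)) = {f b, f c} := by
      rw [hq]
      ext t
      simp only [Finset.mem_insert, Finset.mem_singleton]
      tauto
    rw [this] at hf3
    have := Finset.card_insert_le (f b) ({f c} : Finset (Fin 3))
    simp at this
    omega
  have hfbc : f b ≠ f c := by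
    intro hq
    have : ({f a, f b, f c} : Finset (Fin 3)) = {f a, f c} := by
      rw [hq]; simp
    rw [this] at hf3
    have := Finset.card_insert_le (f a) ({f c} : Finset (Fin 3))
    simp at this
    omega
  have card3 : ({h a, h b, h c} : Finset (Fin n)).card = 3 :=
    Finset.card_eq_three.2 ⟨h a, h b, h c, fun hq => hab (hinj hq),
      fun hq => hac (hinj hq), fun hq => hbc (hinj hq), rfl⟩
  have hE' : ∀ x y z : Fin n, x ∈ X → y ∈ Y → z ∈ Z →
      ∀ q : Finset (Fin n), x ∈ q → y ∈ q → z ∈ q → q.card = 3 → q ∈ E := by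
    intro x y z hx hy hz q hxq hyq hzq hq3
    have hxy : x ≠ y := fun hq => (Finset.disjoint_left.1 hXY hx) (hq ▸ hy)
    have hxz : x ≠ z := fun hq => (Finset.disjoint_left.1 hXZ hx) (hq ▸ hz)
    have hyz : y ≠ z := fun hq => (Finset.disjoint_left.1 hYZ hy) (hq ▸ hz)
    have hsub : ({x, y, z} : Finset (Fin n)) ⊆ q := by
      intro t ht
      simp only [Finset.mem_insert, Finset.mem_singleton] at ht
      rcases ht with rfl | rfl | rfl <;> assumption
    have hcard3 : ({x, y, z} : Finset (Fin n)).card = 3 :=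
      Finset.card_eq_three.2 ⟨x, y, z, hxy, hxz, hyz, rfl⟩
    have : q = ({x, y, z} : Finset (Fin n)) :=
      (Finset.eq_of_subset_of_card_le hsub (by omega)).symm
    rw [this]
    exact hE x hx y hy z hz
  have hPX : ∀ v : α, f v = 0 → h v ∈ X := by
    intro v hv; have := hmem v; rw [hv, hP0] at this; exact this
  have hPY : ∀ v : α, f v = 1 → h v ∈ Y := by
    intro v hv; have := hmem v; rw [hv, hP1] at this; exact this
  have hPZ : ∀ v : α, f v = 2 → h v ∈ Z := by
    intro v hv; have := hmem v; rw [hv, hP2] at this; exact this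
  have htri : ∀ i : Fin 3, i = 0 ∨ i = 1 ∨ i = 2 := by decide
  rcases htri (f a) with hA | hA | hA <;> rcases htri (f b) with hB | hB | hB <;>
    rcases htri (f c) with hC | hC | hC <;>
    first
      | exact absurd (hA.trans hB.symm) hfab
      | exact absurd (hA.trans hC.symm) hfac
      | exact absurd (hB.trans hC.symm) hfbc
      | exact hE' (h a) (h b) (h c) (hPX a hA) (hPY b hB) (hPZ c hC) _
          (by simp) (by simp) (by simp) card3
      | exact hE' (h a) (h c) (h b) (hPX a hA) (hPY c hC) (hPZ b hB) _
          (by simp) (by simp) (by simp) card3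
      | exact hE' (h b) (h a) (h c) (hPX b hB) (hPY a hA) (hPZ c hC) _
          (by simp) (by simp) (by simp) card3
      | exact hE' (h b) (h c) (h a) (hPX b hB) (hPY c hC) (hPZ a hA) _
          (by simp) (by simp) (by simp) card3
      | exact hE' (h c) (h a) (h b) (hPX c hC) (hPY a hA) (hPZ b hB) _
          (by simp) (by simp) (by simp) card3
      | exact hE' (h c) (h b) (h a) (hPX c hC) (hPY b hB) (hPZ a hA) _
          (by simp) (by simp) (by simp) card3

def g3 {n : ℕ} : Fin n → Fin 3 := fun v => ⟨v.val % 3, Nat.mod_lt _ (by norm_num)⟩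

def E3 (n : ℕ) : Finset (Finset (Fin n)) :=
  (univ.powersetCard 3).filter (fun e => (e.image g3).card = 3)

lemma E3_card3 {n : ℕ} : ∀ e ∈ E3 n, e.card = 3 := by
  intro e he
  rw [E3, Finset.mem_filter, Finset.mem_powersetCard] at he
  exact he.1.2

lemma E3_nonempty {n : ℕ} (hn : 3 ≤ n) : (E3 n).Nonempty := by
  set a0 : Fin n := ⟨0, by omega⟩
  set a1 : Fin n := ⟨1, by omega⟩
  set a2 : Fin n := ⟨2, by omega⟩
  have h01 : a0 ≠ a1 := by simp [a0, a1, Fin.ext_iff]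
  have h02 : a0 ≠ a2 := by simp [a0, a2, Fin.ext_iff]
  have h12 : a1 ≠ a2 := by simp [a1, a2, Fin.ext_iff]
  refine ⟨{a0, a1, a2}, ?_⟩
  rw [E3, Finset.mem_filter, Finset.mem_powersetCard]
  refine ⟨⟨Finset.subset_univ _, Finset.card_eq_three.2 ⟨a0, a1, a2, h01, h02, h12, rfl⟩⟩, ?_⟩
  have himg : ({a0, a1, a2} : Finset (Fin n)).image g3 = {g3 a0, g3 a1, g3 a2} := by
    simp [Finset.image_insert]
  rw [himg]
  refine Finset.card_eq_three.2 ⟨g3 a0, g3 a1, g3 a2, ?_, ?_, ?_, rfl⟩ <;>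
    simp [g3, a0, a1, a2, Fin.ext_iff]


lemma E3_free {α : Type} [DecidableEq α] {n : ℕ} (F : Finset (Finset α))
    (hF3 : ¬ ∃ f : α → Fin 3, ∀ e ∈ F, (e.image f).card = 3) :
    ¬ Contains F (E3 n) := by
  rintro ⟨φ, _, hmap⟩
  refine hF3 ⟨fun a => g3 (φ a), fun e he => ?_⟩
  have h1 := hmap e he
  rw [E3, Finset.mem_filter] at h1
  rw [show (fun a => g3 (φ a)) = g3 ∘ φ from rfl, ← Finset.image_image]
  exact h1.2

lemma E3_minpos {n : ℕ} (hn : 3 ≤ n) : n / 3 ≤ minPosCoDeg 3 n (E3 n) := by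
  classical
  obtain ⟨S, hS2, hSdeg, hpos⟩ := minPos_mem E3_card3 (E3_nonempty hn)
  rw [← hSdeg] at hpos ⊢
  obtain ⟨u, v, huv, rfl⟩ := Finset.card_eq_two.1 hS2
  -- find an edge containing S
  rw [coDeg, Finset.card_pos] at hpos
  obtain ⟨e, he⟩ := hpos
  rw [Finset.mem_filter] at he
  obtain ⟨heE, heS⟩ := he
  have hecard := E3_card3 e heE
  have hinj : Set.InjOn (g3 : Fin n → Fin 3) (↑e : Set (Fin n)) := by
    rw [E3, Finset.mem_filter] at heE
    exact Finset.card_image_iff.1 (by rw [heE.2, hecard])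
  have hguv : g3 u ≠ g3 v := by
    intro hq
    exact huv (hinj (heS (by simp)) (heS (by simp)) hq)
  have hthird : ∀ a b : Fin 3, a ≠ b → ∃ c : Fin 3, c ≠ a ∧ c ≠ b := by decide
  obtain ⟨i, hiu, hiv⟩ := hthird _ _ hguv
  set cls : Finset (Fin n) := univ.filter (fun w => g3 w = i) with hcls
  have hclscoDeg : cls.card ≤ coDeg (E3 n) {u, v} := by
    rw [coDeg]
    refine Finset.card_le_card_of_injOn (fun w => insert w {u, v}) ?_ ?_
    · intro w hw
      rw [hcls, Finset.mem_coe, Finset.mem_filter] at hw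
      have hwu : w ≠ u := fun hq => hiu (hq ▸ hw.2).symm
      have hwv : w ≠ v := fun hq => hiv (hq ▸ hw.2).symm
      have hwS : w ∉ ({u, v} : Finset (Fin n)) := by simp [hwu, hwv]
      rw [Finset.mem_coe, Finset.mem_filter]
      refine ⟨?_, Finset.subset_insert _ _⟩
      rw [E3, Finset.mem_filter, Finset.mem_powersetCard]
      refine ⟨⟨Finset.subset_univ _, ?_⟩, ?_⟩
      · rw [Finset.card_insert_of_notMem hwS, hS2]
      · have himg : (insert w ({u, v} : Finset (Fin n))).image g3 = {g3 w, g3 u, g3 v} := by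
          simp [Finset.image_insert]
        rw [himg]
        exact Finset.card_eq_three.2 ⟨g3 w, g3 u, g3 v, by rw [hw.2]; exact hiu,
          by rw [hw.2]; exact hiv, hguv, rfl⟩
    · intro w hw w' hw' hq
      rw [Finset.mem_coe, hcls, Finset.mem_filter] at hw hw'
      have hwu : w ≠ u := fun h => hiu (h ▸ hw.2).symm
      have hwv : w ≠ v := fun h => hiv (h ▸ hw.2).symm
      have hq' : insert w ({u, v} : Finset (Fin n)) = insert w' ({u, v} : Finset (Fin n)) := hq
      have : w ∈ insert w' ({u, v} : Finset (Fin n)) := hq' ▸ Finset.mem_insert_self w _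
      simp only [Finset.mem_insert, Finset.mem_singleton] at this
      tauto
  refine le_trans ?_ hclscoDeg
  calc n / 3 = (univ : Finset (Fin (n / 3))).card := by simp
    _ ≤ cls.card := by
      refine Finset.card_le_card_of_injOn
        (fun j => (⟨3 * j.val + i.val, ?_⟩ : Fin n)) ?_ ?_
      · have h1 : j.val < n / 3 := j.2
        have h2 : i.val < 3 := i.2
        have h3 : n / 3 * 3 ≤ n := Nat.div_mul_le_self n 3
        omega
      · intro j _
        rw [hcls, Finset.mem_coe, Finset.mem_filter]
        refine ⟨Finset.mem_univ _, ?_⟩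
        have h2 : i.val < 3 := i.2
        rw [g3]
        apply Fin.ext
        simp only
        omega
      · intro j _ j' _ hq
        have := congrArg Fin.val hq
        simp only at this
        apply Fin.ext
        omega


/-- Dichotomy for 3-graphs `F`: if `F` is 3-partite then `co⁺ex(n, F) = O(n^(1-ε))`
for some `ε > 0`; otherwise `co⁺ex(n, F) ≥ ⌊n/3⌋` for all `n ≥ 3`, and in particular
`co⁺ex(n, F) = Θ(n)`. -/
theorem coPlusEx_threePartite_dichotomy {α : Type} [Fintype α] [DecidableEq α]
    (F : Finset (Finset α)) (hcard : ∀ e ∈ F, e.card = 3) (hne : F.Nonempty) :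
    ((∃ f : α → Fin 3, ∀ e ∈ F, (e.image f).card = 3) →
      ∃ ε C : ℝ, 0 < ε ∧ 0 < C ∧ ∀ n : ℕ, 3 ≤ n →
        (coPlusEx 3 n F : ℝ) ≤ C * (n : ℝ) ^ ((1 : ℝ) - ε)) ∧
    (¬ (∃ f : α → Fin 3, ∀ e ∈ F, (e.image f).card = 3) →
      (∀ n : ℕ, 3 ≤ n → n / 3 ≤ coPlusEx 3 n F) ∧
      ∃ c C : ℝ, 0 < c ∧ 0 < C ∧ ∀ n : ℕ, 3 ≤ n →
        c * (n : ℝ) ≤ (coPlusEx 3 n F : ℝ) ∧ (coPlusEx 3 n F : ℝ) ≤ C * n) := by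
  classical
  set s := Fintype.card α with hs
  have hs3 : 3 ≤ s := by
    obtain ⟨e, he⟩ := hne
    calc 3 = e.card := (hcard e he).symm
      _ ≤ Fintype.card α := Finset.card_le_univ e
  have hs1 : 1 ≤ s := by omega
  constructor
  · rintro ⟨f, hf⟩
    refine ⟨1/((s*(s+2) : ℕ) : ℝ), ((2^(s*s+3*s) * s^s : ℕ) : ℝ), by positivity, by positivity, ?_⟩
    intro n hn3
    set DSet := {d : ℕ | ∃ E : Finset (Finset (Fin n)),
      (∀ e ∈ E, e.card = 3) ∧ E.Nonempty ∧ ¬ Contains F E ∧ minPosCoDeg 3 n E = d} with hDSet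
    have hcoPlus : coPlusEx 3 n F = sSup DSet := rfl
    have hball : ∀ d ∈ DSet, (d:ℝ) ≤
        ((2^(s*s+3*s) * s^s : ℕ) : ℝ) * (n : ℝ) ^ ((1:ℝ) - 1/((s*(s+2) : ℕ) : ℝ)) := by
      rintro d ⟨E, hE3, hEne, hEfree, hEmin⟩
      by_contra hgt
      push_neg at hgt
      set M : ℕ := 2^(s*s+3*s) * s^s with hM
      have hM1 : 1 ≤ M := by
        have h0 : 0 < M := by positivity
        omega
      have hn0 : (0:ℝ) < (n:ℝ) := by
        have : 0 < n := by omega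
        exact_mod_cast this
      have hK1 : 1 ≤ s*(s+2) := by nlinarith
      set K := s*(s+2) with hK
      -- derive the natural-number hypothesis
      have HYP : 2^(s*s+3*s) * s^s * n^(s*(s+2)-1) ≤ (minPosCoDeg 3 n E)^(s*(s+2)) := by
        rw [hEmin, ← hK, ← hM]
        have h1 : ((M:ℝ) * (n:ℝ)^((1:ℝ) - 1/((K:ℕ):ℝ)))^K ≤ ((d:ℝ))^K := by
          apply pow_le_pow_left₀ (by positivity) hgt.le
        have h3 : ((n:ℝ)^((1:ℝ)-1/((K:ℕ):ℝ)))^(K:ℕ) = ((n^(K-1) : ℕ) : ℝ) := by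
          rw [← Real.rpow_natCast ((n:ℝ)^((1:ℝ)-1/((K:ℕ):ℝ))) K, ← Real.rpow_mul hn0.le]
          have hKr : (0:ℝ) < ((K:ℕ):ℝ) := by
            have : 0 < K := by omega
            exact_mod_cast this
          have he : ((1:ℝ)-1/((K:ℕ):ℝ)) * ((K:ℕ):ℝ) = (((K-1 : ℕ)):ℝ) := by
            have hc : (((K-1 : ℕ)):ℝ) = ((K:ℕ):ℝ) - 1 := by
              have : (1:ℕ) ≤ K := hK1
              push_cast [Nat.cast_sub this]
              ring
            rw [hc]
            field_simp
          rw [he, Real.rpow_natCast]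
          push_cast
          ring
        have h4 : ((M * n^(K-1) : ℕ) : ℝ) ≤ ((d:ℝ))^K := by
          push_cast
          calc (M:ℝ) * ((n:ℝ))^((K-1 : ℕ)) ≤ (M:ℝ)^K * ((n:ℝ))^((K-1 : ℕ)) := by
                refine mul_le_mul_of_nonneg_right ?_ (by positivity)
                refine le_self_pow₀ ?_ (by omega)
                exact_mod_cast hM1
            _ = ((M:ℝ) * (n:ℝ)^((1:ℝ)-1/((K:ℕ):ℝ)))^K := by
                rw [mul_pow, h3]
                push_cast
                ring
            _ ≤ ((d:ℝ))^K := h1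
        have h5 : M * n^(K-1) ≤ d^K := by exact_mod_cast h4
        exact h5
      obtain ⟨X, Y, Z, hX, hY, hZ, hXY, hXZ, hYZ, hE⟩ := key_Ksss hs1 hE3 hEne HYP
      exact absurd (contains_of_Ksss (by omega) F hcard f hf (hs ▸ hX) (hs ▸ hY) (hs ▸ hZ)
        hXY hXZ hYZ hE) hEfree
    rw [hcoPlus]
    rcases Set.eq_empty_or_nonempty DSet with hemp | hne'
    · rw [hemp, csSup_empty]
      simp only [Nat.bot_eq_zero, Nat.cast_zero]
      positivity
    · have hbdd : BddAbove DSet := by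
        refine ⟨n, ?_⟩
        rintro d ⟨E, h1, h2, _, h4⟩
        exact h4 ▸ minPos_le_n h1 h2
      exact hball _ (Nat.sSup_mem hne' hbdd)
  · intro hF3
    have main : ∀ n : ℕ, 3 ≤ n → n/3 ≤ coPlusEx 3 n F ∧ coPlusEx 3 n F ≤ n := by
      intro n hn
      set DSet := {d : ℕ | ∃ E : Finset (Finset (Fin n)),
        (∀ e ∈ E, e.card = 3) ∧ E.Nonempty ∧ ¬ Contains F E ∧ minPosCoDeg 3 n E = d} with hDSet
      have hcoPlus : coPlusEx 3 n F = sSup DSet := rfl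
      have hmem : minPosCoDeg 3 n (E3 n) ∈ DSet :=
        ⟨E3 n, E3_card3, E3_nonempty hn, E3_free F hF3, rfl⟩
      have hbdd : BddAbove DSet := by
        refine ⟨n, ?_⟩
        rintro d ⟨E, h1, h2, _, h4⟩
        exact h4 ▸ minPos_le_n h1 h2
      constructor
      · rw [hcoPlus]
        exact le_trans (E3_minpos hn) (le_csSup hbdd hmem)
      · rw [hcoPlus]
        refine csSup_le ⟨_, hmem⟩ ?_
        rintro d ⟨E, h1, h2, _, h4⟩
        exact h4 ▸ minPos_le_n h1 h2
    refine ⟨fun n hn => (main n hn).1, 1/9, 1, by norm_num, one_pos, fun n hn => ⟨?_, ?_⟩⟩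
    · have h1 := (main n hn).1
      have h9 : n ≤ 9 * coPlusEx 3 n F := by omega
      have h9' : (n:ℝ) ≤ 9 * (coPlusEx 3 n F : ℝ) := by exact_mod_cast h9
      linarith
    · have h2 := (main n hn).2
      rw [one_mul]
      exact_mod_cast h2
end

section
/- Let r ≥ 2 and let F be an r-graph such that every (r−1)-element subset of the vertex set of F is contained in at least one edge of F (i.e., δ_{r−1}(F) > 0). Then the limit lim_{n→∞} co⁺ex(n, F)/n exists. -/
open Finset

-- Section 1

lemma card_filter_superset_le {n : ℕ} (E : Finset (Finset (Fin n))) (S : Finset (Fin n))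
    (hc : ∀ e ∈ E, e.card = S.card + 1) : coDeg E S ≤ n := by
  unfold coDeg
  have h := Finset.card_le_card_of_injOn (s := E.filter (fun e => S ⊆ e)) (fun e => e \ S)
    (t := Finset.univ.powersetCard 1) ?_ ?_
  · calc (E.filter (fun e => S ⊆ e)).card ≤ (Finset.univ.powersetCard 1 :
        Finset (Finset (Fin n))).card := h
    _ = n := by
        rw [Finset.card_powersetCard]
        simp [Nat.choose_one_right]
  · intro e he
    rw [Finset.mem_coe, Finset.mem_filter] at he
    rw [Finset.mem_coe, Finset.mem_powersetCard]
    refine ⟨Finset.subset_univ _, ?_⟩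
    rw [Finset.card_sdiff_of_subset he.2, hc e he.1]
    omega
  · intro e he e' he' hee
    simp only [Finset.coe_filter, Set.mem_setOf_eq] at he he'
    have hee' : e \ S = e' \ S := hee
    have : S ∪ (e \ S) = S ∪ (e' \ S) := by rw [hee']
    rwa [Finset.union_sdiff_of_subset he.2, Finset.union_sdiff_of_subset he'.2] at this

lemma minPosCoDeg_le {r n : ℕ} (E : Finset (Finset (Fin n))) (hr : 1 ≤ r)
    (hc : ∀ e ∈ E, e.card = r) : minPosCoDeg r n E ≤ n := by
  unfold minPosCoDeg
  set s := {d : ℕ | ∃ S : Finset (Fin n), S.card = r - 1 ∧ coDeg E S = d ∧ 0 < d} with hs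
  rcases Set.eq_empty_or_nonempty s with h | h
  · rw [h]; simp [Nat.sInf_empty]
  · obtain ⟨S, hS, hd, _⟩ := Nat.sInf_mem h
    rw [← hd]
    exact card_filter_superset_le E S (by intro e he; rw [hc e he, hS]; omega)

lemma coPlusEx_mem_le {α : Type*} [DecidableEq α] {r n : ℕ} (hr : 1 ≤ r)
    (F : Finset (Finset α)) :
    ∀ d ∈ {d : ℕ | ∃ E : Finset (Finset (Fin n)),
      (∀ e ∈ E, e.card = r) ∧ E.Nonempty ∧ ¬ Contains F E ∧ minPosCoDeg r n E = d}, d ≤ n := by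
  rintro d ⟨E, hc, -, -, hd⟩
  rw [← hd]; exact minPosCoDeg_le E hr hc

lemma coPlusEx_bddAbove {α : Type*} [DecidableEq α] {r n : ℕ} (hr : 1 ≤ r)
    (F : Finset (Finset α)) :
    BddAbove {d : ℕ | ∃ E : Finset (Finset (Fin n)),
      (∀ e ∈ E, e.card = r) ∧ E.Nonempty ∧ ¬ Contains F E ∧ minPosCoDeg r n E = d} :=
  ⟨n, coPlusEx_mem_le hr F⟩

lemma coPlusEx_le {α : Type*} [DecidableEq α] {r n : ℕ} (hr : 1 ≤ r)
    (F : Finset (Finset α)) : coPlusEx r n F ≤ n := by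
  unfold coPlusEx
  rcases Set.eq_empty_or_nonempty {d : ℕ | ∃ E : Finset (Finset (Fin n)),
      (∀ e ∈ E, e.card = r) ∧ E.Nonempty ∧ ¬ Contains F E ∧ minPosCoDeg r n E = d} with h | h
  · rw [h]; simp
  · exact csSup_le h (coPlusEx_mem_le hr F)

lemma le_coPlusEx {α : Type*} [DecidableEq α] {r n : ℕ} (hr : 1 ≤ r)
    (F : Finset (Finset α)) (E : Finset (Finset (Fin n)))
    (hc : ∀ e ∈ E, e.card = r) (hne : E.Nonempty) (hfree : ¬ Contains F E) :
    minPosCoDeg r n E ≤ coPlusEx r n F :=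
  le_csSup (coPlusEx_bddAbove hr F) ⟨E, hc, hne, hfree, rfl⟩

-- Section 2 : convergence lemma

lemma tendsto_of_superlinear (a : ℕ → ℕ) (hle : ∀ n, a n ≤ n)
    (hsup : ∀ n N : ℕ, 1 ≤ n → n ≤ N → (N / n) * a n ≤ a N) :
    ∃ L : ℝ, Filter.Tendsto (fun n : ℕ => (a n : ℝ) / n) Filter.atTop (nhds L) := by
  set S : Set ℝ := {x : ℝ | ∃ n : ℕ, 1 ≤ n ∧ x = (a n : ℝ) / n} with hS
  have hSne : S.Nonempty := ⟨(a 1 : ℝ) / (1:ℕ), 1, le_refl _, rfl⟩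
  have hSbdd : BddAbove S := by
    refine ⟨1, ?_⟩
    rintro x ⟨n, hn, rfl⟩
    rw [div_le_one (by positivity)]
    exact_mod_cast hle n
  set L := sSup S with hL
  refine ⟨L, ?_⟩
  rw [Metric.tendsto_atTop]
  intro ε hε
  -- choose n₀ with a n₀ / n₀ > L - ε/2
  have h1 : L - ε/2 < L := by linarith
  obtain ⟨x, ⟨n₀, hn₀, rfl⟩, hx⟩ := exists_lt_of_lt_csSup hSne h1
  -- choose N₀
  obtain ⟨M, hM⟩ := exists_nat_gt ((2 * n₀ : ℝ) / ε)
  refine ⟨max (max n₀ 1) M, ?_⟩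
  intro N hN
  have hN1 : 1 ≤ N := le_trans (le_trans (le_max_right n₀ 1) (le_max_left _ M)) hN
  have hNn₀ : n₀ ≤ N := le_trans (le_trans (le_max_left n₀ 1) (le_max_left _ M)) hN
  have hNpos : (0:ℝ) < N := by exact_mod_cast hN1
  have hub : (a N : ℝ) / N ≤ L := le_csSup hSbdd ⟨N, hN1, rfl⟩
  -- lower bound
  have hq : (N / n₀ : ℕ) * a n₀ ≤ a N := hsup n₀ N hn₀ hNn₀
  have hn₀pos : (0:ℝ) < n₀ := by exact_mod_cast hn₀
  have hqq : (N : ℝ) - n₀ < (N / n₀ : ℕ) * n₀ + 1 ∧ (N:ℝ) - n₀ ≤ (N / n₀ : ℕ) * n₀ := by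
    have h5 := Nat.div_add_mod N n₀
    have h6 : N % n₀ < n₀ := Nat.mod_lt _ (by omega)
    have h7 : ((n₀ * (N / n₀) + N % n₀ : ℕ) : ℝ) = N := by exact_mod_cast congrArg Nat.cast h5
    push_cast at h7
    have h8 : ((N % n₀ : ℕ) : ℝ) < n₀ := by exact_mod_cast h6
    constructor <;> nlinarith [h7, h8]
  have key : (a n₀ : ℝ) / n₀ - n₀ / N ≤ (a N : ℝ) / N := by
    have h2 : ((N / n₀ : ℕ) : ℝ) * a n₀ ≤ a N := by exact_mod_cast hq
    have han : (a n₀ : ℝ) ≤ n₀ := by exact_mod_cast hle n₀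
    have hann : (0:ℝ) ≤ a n₀ := by positivity
    rw [div_sub_div _ _ (ne_of_gt hn₀pos) (ne_of_gt hNpos), div_le_div_iff₀ (by positivity) hNpos]
    -- (a n₀ * N - n₀ * n₀) * N ≤ a N * (n₀ * N)
    have h3 : (a n₀ : ℝ) * ((N/n₀ : ℕ) * n₀) ≥ a n₀ * (N - n₀) := by nlinarith [hqq.2]
    have e1 : (a n₀ : ℝ) * (N - n₀) * N ≤ (a N) * n₀ * N := by
      have e2 : (a n₀ : ℝ) * ((N/n₀ : ℕ) * n₀) = ((N/n₀ : ℕ) : ℝ) * a n₀ * n₀ := by ring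
      have e3 : ((N/n₀ : ℕ) : ℝ) * a n₀ * n₀ ≤ (a N : ℝ) * n₀ :=
        mul_le_mul_of_nonneg_right h2 (le_of_lt hn₀pos)
      have e4 : (a n₀ : ℝ) * (N - n₀) ≤ (a N : ℝ) * n₀ := by
        calc (a n₀ : ℝ) * (N - n₀) ≤ (a n₀ : ℝ) * ((N/n₀ : ℕ) * n₀) := h3
        _ = ((N/n₀ : ℕ) : ℝ) * a n₀ * n₀ := e2
        _ ≤ (a N : ℝ) * n₀ := e3
      exact mul_le_mul_of_nonneg_right e4 (le_of_lt hNpos)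
    nlinarith [e1, mul_le_mul_of_nonneg_right (mul_le_mul_of_nonneg_right han (le_of_lt hn₀pos)) (le_of_lt hNpos)]
  have hlow : L - ε < (a N : ℝ) / N := by
    have hMN : ((2 * n₀ : ℝ) / ε) < N := lt_of_lt_of_le hM (by exact_mod_cast le_trans (le_max_right _ M) hN)
    have : (n₀ : ℝ) / N < ε / 2 := by
      rw [div_lt_iff₀ hNpos]
      rw [div_lt_iff₀ hε] at hMN
      nlinarith
    linarith
  rw [Real.dist_eq, abs_lt]
  constructor <;> linarith

-- Section 3 : blow-up lemma

lemma blowup_superlinear {α : Type*} [DecidableEq α] {r : ℕ} (hr : 1 ≤ r)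
    (F : Finset (Finset α)) (hcard : ∀ e ∈ F, e.card = r)
    (hpair : ∀ u v : α, u ≠ v → ∃ e ∈ F, u ∈ e ∧ v ∈ e)
    (n N : ℕ) (hn : 1 ≤ n) (hnN : n ≤ N) :
    (N / n) * coPlusEx r n F ≤ coPlusEx r N F := by
  set s := {d : ℕ | ∃ E : Finset (Finset (Fin n)),
      (∀ e ∈ E, e.card = r) ∧ E.Nonempty ∧ ¬ Contains F E ∧ minPosCoDeg r n E = d} with hs
  rcases Set.eq_empty_or_nonempty s with hemp | hne
  · have : coPlusEx r n F = 0 := by unfold coPlusEx; rw [← hs, hemp]; simp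
    simp [this]
  obtain ⟨E, hEc, hEne, hEfree, hEd⟩ := Nat.sSup_mem hne ⟨n, coPlusEx_mem_le hr F⟩
  have hd : coPlusEx r n F = minPosCoDeg r n E := by unfold coPlusEx; rw [← hs, hEd]
  set d := minPosCoDeg r n E with hdd
  set t := N / n with ht
  have htpos : 1 ≤ t := (Nat.one_le_div_iff (by omega)).mpr hnN
  have hnpos : 0 < n := hn
  -- the class map
  set f : Fin N → Fin n := fun v => ⟨v.val % n, Nat.mod_lt _ hnpos⟩ with hf
  -- lifting
  have hliftlt : ∀ (y : Fin n) (j : Fin t), (y : ℕ) + (j : ℕ) * n < N := by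
    intro y j
    have h1 : (j : ℕ) ≤ t - 1 := by omega
    have h2 : (y : ℕ) + (j : ℕ) * n < n + (t-1) * n := by
      have := y.isLt
      have : (j:ℕ) * n ≤ (t-1) * n := Nat.mul_le_mul_right n h1
      omega
    have h3 : n + (t-1)*n = t * n := by
      obtain ⟨u, hu⟩ : ∃ u, t = u + 1 := ⟨t - 1, by omega⟩
      rw [hu, Nat.add_sub_cancel]; ring
    have h4 : t * n ≤ N := by rw [ht]; exact Nat.div_mul_le_self N n
    omega
  set lift : Fin n → Fin t → Fin N := fun y j => ⟨(y : ℕ) + (j : ℕ) * n, hliftlt y j⟩ with hlift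
  have hfl : ∀ (y : Fin n) (j : Fin t), f (lift y j) = y := by
    intro y j
    simp only [hf, hlift]
    apply Fin.ext
    simp [Nat.add_mul_mod_self_right, Nat.mod_eq_of_lt y.isLt]
  -- the blow-up
  set E' : Finset (Finset (Fin N)) :=
    (Finset.univ.powersetCard r).filter (fun e => e.image f ∈ E) with hE'
  have hE'c : ∀ e ∈ E', e.card = r := by
    intro e he
    rw [hE', Finset.mem_filter, Finset.mem_powersetCard] at he
    exact he.1.2
  have hE'mem : ∀ e ∈ E', e.image f ∈ E := by
    intro e he; rw [hE', Finset.mem_filter] at he; exact he.2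
  have hinj : ∀ e ∈ E', Set.InjOn f e := by
    intro e he
    apply Finset.injOn_of_card_image_eq
    rw [hEc _ (hE'mem e he), hE'c e he]
  -- nonempty
  obtain ⟨e₀, he₀⟩ := hEne
  have hE'ne : E'.Nonempty := by
    refine ⟨e₀.map (Fin.castLEEmb hnN), ?_⟩
    rw [hE', Finset.mem_filter, Finset.mem_powersetCard]
    refine ⟨⟨Finset.subset_univ _, by rw [Finset.card_map]; exact hEc e₀ he₀⟩, ?_⟩
    have himg : (e₀.map (Fin.castLEEmb hnN)).image f = e₀ := by
      rw [Finset.map_eq_image, Finset.image_image]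
      have hcomp : (f ∘ (Fin.castLEEmb hnN)) = id := by
        funext y; apply Fin.ext
        simp only [hf, Function.comp_apply, Fin.castLEEmb_apply, Fin.coe_castLE, id_eq]
        exact Nat.mod_eq_of_lt y.isLt
      rw [hcomp, Finset.image_id]
    rw [himg]; exact he₀
  -- F-freeness
  have hE'free : ¬ Contains F E' := by
    rintro ⟨g, ginj, hg⟩
    apply hEfree
    refine ⟨fun a => f (g a), ?_, ?_⟩
    · intro u v huv
      by_contra hne'
      obtain ⟨e, heF, hu, hv⟩ := hpair u v hne'
      have hgE' : e.image g ∈ E' := hg e heF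
      have hguv : g u = g v :=
        (hinj _ hgE') (Finset.mem_coe.mpr (Finset.mem_image_of_mem g hu))
          (Finset.mem_coe.mpr (Finset.mem_image_of_mem g hv)) huv
      exact hne' (ginj hguv)
    · intro e heF
      have := hE'mem (e.image g) (hg e heF)
      rwa [Finset.image_image] at this
  -- min positive codegree of the blow-up
  have hkey : t * d ≤ minPosCoDeg r N E' := by
    obtain ⟨e', he'⟩ := hE'ne
    have he'card : e'.card = r := hE'c e' he'
    obtain ⟨S₀, hS₀sub, hS₀card⟩ := Finset.exists_subset_card_eq
      (show r - 1 ≤ e'.card by omega)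
    have hpos₀ : 0 < coDeg E' S₀ := by
      rw [coDeg, Finset.card_pos]
      exact ⟨e', Finset.mem_filter.mpr ⟨he', hS₀sub⟩⟩
    unfold minPosCoDeg
    refine le_csInf ⟨coDeg E' S₀, ⟨S₀, hS₀card, rfl, hpos₀⟩⟩ ?_
    rintro b ⟨S', hS'card, rfl, hS'pos⟩
    rw [coDeg, Finset.card_pos] at hS'pos
    obtain ⟨e₁, he₁⟩ := hS'pos
    rw [Finset.mem_filter] at he₁
    obtain ⟨he₁E', hS'e₁⟩ := he₁
    have hinj₁ : Set.InjOn f e₁ := hinj _ he₁E'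
    set S := S'.image f with hS
    have hScard : S.card = r - 1 := by
      rw [hS, Finset.card_image_of_injOn (hinj₁.mono (Finset.coe_subset.mpr hS'e₁))]
      exact hS'card
    have hSsub : S ⊆ e₁.image f := Finset.image_subset_image hS'e₁
    have hSpos : 0 < coDeg E S := by
      rw [coDeg, Finset.card_pos]
      exact ⟨e₁.image f, Finset.mem_filter.mpr ⟨hE'mem _ he₁E', hSsub⟩⟩
    have hdle : d ≤ coDeg E S := Nat.sInf_le ⟨S, hScard, rfl, hSpos⟩
    -- counting injection
    have hliftS' : ∀ (y : Fin n) (j : Fin t), y ∉ S → lift y j ∉ S' := by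
      intro y j hyS hyS'
      apply hyS
      have : f (lift y j) ∈ S := by rw [hS]; exact Finset.mem_image_of_mem f hyS'
      rwa [hfl] at this
    have hcount : coDeg E S * t ≤ coDeg E' S' := by
      unfold coDeg
      have hmain := Finset.card_le_card_of_injOn
        (s := (E.filter (fun w => S ⊆ w)) ×ˢ (Finset.univ : Finset (Fin t)))
        (t := E'.filter (fun e => S' ⊆ e))
        (fun p => S' ∪ (p.1 \ S).image (fun y => lift y p.2)) ?_ ?_
      · calc (E.filter (fun w => S ⊆ w)).card * t
            = ((E.filter (fun w => S ⊆ w)) ×ˢ (Finset.univ : Finset (Fin t))).card := by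
              rw [Finset.card_product, Finset.card_univ, Fintype.card_fin]
        _ ≤ (E'.filter (fun e => S' ⊆ e)).card := hmain
      · rintro ⟨w, j⟩ hp
        rw [Finset.mem_coe, Finset.mem_product, Finset.mem_filter] at hp
        obtain ⟨⟨hwE, hSw⟩, -⟩ := hp
        dsimp only
        have hwcard : w.card = r := hEc w hwE
        have hsd : (w \ S).card = 1 := by rw [Finset.card_sdiff_of_subset hSw, hwcard, hScard]; omega
        obtain ⟨y₀, hy₀⟩ := Finset.card_eq_one.mp hsd
        have hy₀w : y₀ ∈ w \ S := by rw [hy₀]; exact Finset.mem_singleton_self y₀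
        have hy₀S : y₀ ∉ S := (Finset.mem_sdiff.mp hy₀w).2
        have himgX : ((w \ S).image (fun y => lift y j)) = {lift y₀ j} := by
          rw [hy₀, Finset.image_singleton]
        have hnotS' : lift y₀ j ∉ S' := hliftS' y₀ j hy₀S
        rw [himgX, Finset.mem_coe, Finset.mem_filter]
        constructor
        · rw [hE', Finset.mem_filter, Finset.mem_powersetCard]
          refine ⟨⟨Finset.subset_univ _, ?_⟩, ?_⟩
          · rw [Finset.union_comm, ← Finset.insert_eq,
              Finset.card_insert_of_notMem hnotS', hS'card]
            omega
          · rw [Finset.image_union, Finset.image_singleton, ← hS, hfl]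
            have hw : S ∪ {y₀} = w := by
              rw [← hy₀, Finset.union_sdiff_of_subset hSw]
            rw [hw]; exact hwE
        · exact Finset.subset_union_left
      · rintro ⟨w, j⟩ hp ⟨w', j'⟩ hp' heq
        simp only [Finset.mem_coe, Finset.mem_product, Finset.mem_filter] at hp hp'
        obtain ⟨⟨hwE, hSw⟩, -⟩ := hp
        obtain ⟨⟨hw'E, hSw'⟩, -⟩ := hp'
        have hsd : (w \ S).card = 1 := by
          rw [Finset.card_sdiff_of_subset hSw, hEc w hwE, hScard]; omega
        have hsd' : (w' \ S).card = 1 := by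
          rw [Finset.card_sdiff_of_subset hSw', hEc w' hw'E, hScard]; omega
        obtain ⟨y₀, hy₀⟩ := Finset.card_eq_one.mp hsd
        obtain ⟨y₁, hy₁⟩ := Finset.card_eq_one.mp hsd'
        have hy₀S : y₀ ∉ S := by
          have : y₀ ∈ w \ S := by rw [hy₀]; exact Finset.mem_singleton_self y₀
          exact (Finset.mem_sdiff.mp this).2
        have hy₁S : y₁ ∉ S := by
          have : y₁ ∈ w' \ S := by rw [hy₁]; exact Finset.mem_singleton_self y₁
          exact (Finset.mem_sdiff.mp this).2
        simp only [hy₀, hy₁, Finset.image_singleton] at heq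
        have hmem : lift y₀ j ∈ S' ∪ {lift y₁ j'} := by
          rw [← heq]
          exact Finset.mem_union_right _ (Finset.mem_singleton_self _)
        have hlifteq : lift y₀ j = lift y₁ j' := by
          rcases Finset.mem_union.mp hmem with h | h
          · exact absurd h (hliftS' y₀ j hy₀S)
          · exact Finset.mem_singleton.mp h
        have hval : (y₀ : ℕ) + (j : ℕ) * n = (y₁ : ℕ) + (j' : ℕ) * n := by
          have := congrArg Fin.val hlifteq
          simpa [hlift] using this
        have hjj : (j : ℕ) = (j' : ℕ) := by
          have h1 : ((y₀ : ℕ) + (j : ℕ) * n) / n = (j : ℕ) := by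
            rw [Nat.add_mul_div_right _ _ hnpos, Nat.div_eq_of_lt y₀.isLt]; omega
          have h2 : ((y₁ : ℕ) + (j' : ℕ) * n) / n = (j' : ℕ) := by
            rw [Nat.add_mul_div_right _ _ hnpos, Nat.div_eq_of_lt y₁.isLt]; omega
          rw [← h1, ← h2, hval]
        have hyy : y₀ = y₁ := by
          apply Fin.ext
          have hjn : (j : ℕ) * n = (j' : ℕ) * n := by rw [hjj]
          omega
        have hww : w = w' := by
          rw [← Finset.union_sdiff_of_subset hSw, ← Finset.union_sdiff_of_subset hSw',
            hy₀, hy₁, hyy]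
        have hjj' : j = j' := Fin.ext hjj
        rw [hww, hjj']
    calc t * d ≤ t * coDeg E S := Nat.mul_le_mul_left t hdle
    _ = coDeg E S * t := Nat.mul_comm _ _
    _ ≤ coDeg E' S' := hcount
  rw [hd]
  calc t * d ≤ minPosCoDeg r N E' := hkey
  _ ≤ coPlusEx r N F := le_coPlusEx hr F E' hE'c hE'ne hE'free

-- Section 4 : Erdős–Stone, minimum degree form

noncomputable def tauES (p : ℕ) : ℝ := if p = 0 then 0 else 1 - 1/(p:ℝ)

lemma tauES_mono (p : ℕ) : tauES p ≤ tauES (p+1) := by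
  unfold tauES
  rcases Nat.eq_zero_or_pos p with h | h
  · subst h; norm_num
  · rw [if_neg (by omega), if_neg (by omega)]
    have h1 : (0:ℝ) < p := by exact_mod_cast h
    have : 1/((p:ℝ)+1) ≤ 1/(p:ℝ) := by
      apply one_div_le_one_div_of_le h1; linarith
    push_cast
    linarith

lemma tauES_succ (p : ℕ) : tauES (p+1) = 1 - 1/((p:ℝ)+1) := by
  unfold tauES
  rw [if_neg (by omega)]
  push_cast
  ring_nf

set_option maxHeartbeats 1600000 in
lemma erdos_stone : ∀ (p t : ℕ) (ε : ℝ), 0 < ε →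
    ∃ N : ℕ, 1 ≤ N ∧ ∀ (n : ℕ) (W : Finset (Fin n)) (A : Fin n → Finset (Fin n)),
    (∀ v, A v ⊆ W) → (∀ u v, u ∈ A v → v ∈ A u) → (∀ v, v ∉ A v) →
    N ≤ W.card → (∀ v ∈ W, (tauES p + ε) * W.card ≤ ((A v).card : ℝ)) →
    ∃ P : Fin (p+1) → Finset (Fin n),
      (∀ i, P i ⊆ W) ∧ (∀ i, (P i).card = t) ∧
      (∀ i j, i ≠ j → Disjoint (P i) (P j)) ∧
      (∀ i j, i ≠ j → ∀ u ∈ P i, ∀ v ∈ P j, v ∈ A u) := by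
  intro p
  induction p with
  | zero =>
    intro t ε hε
    refine ⟨max t 1, le_max_right t 1, ?_⟩
    intro n W A hsub hsymm hirr hNW hdeg
    obtain ⟨V₀, hV₀sub, hV₀card⟩ := Finset.exists_subset_card_eq
      (show t ≤ W.card from le_trans (le_max_left t 1) hNW)
    refine ⟨fun _ => V₀, fun _ => hV₀sub, fun _ => hV₀card, ?_, ?_⟩
    · intro i j hij
      exact absurd (Fin.ext (by have := i.isLt; have := j.isLt; omega)) hij
    · intro i j hij
      exact absurd (Fin.ext (by have := i.isLt; have := j.isLt; omega)) hij
  | succ p ih =>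
    intro t ε hε
    -- parameters
    set T : ℕ := t + 1 + ⌈(2*(t:ℝ))/ε⌉₊ with hT
    have hTt : t + 1 ≤ T := by omega
    have hTbig : 2*(t:ℝ)/ε ≤ T := by
      have h1 := Nat.le_ceil (2*(t:ℝ)/ε)
      have h2 : (⌈(2*(t:ℝ))/ε⌉₊ : ℕ) ≤ T := by omega
      have h3 : ((⌈(2*(t:ℝ))/ε⌉₊ : ℕ) : ℝ) ≤ (T:ℝ) := by exact_mod_cast h2
      linarith
    set ε'' : ℝ := ε + (tauES (p+1) - tauES p) with hε''def
    have hε'' : 0 < ε'' := by have := tauES_mono p; rw [hε''def]; linarith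
    obtain ⟨N₁, hN₁1, hES⟩ := ih T ε'' hε''
    set M : ℕ := 2 ^ (T * (p+1)) with hM
    set N : ℕ := max N₁ (max 1 (⌈(2*((M*t:ℕ)+1:ℝ))/ε⌉₊ + 1)) with hN
    refine ⟨N, le_trans (le_max_left 1 _) (le_max_right N₁ _), ?_⟩
    intro n W A hsub hsymm hirr hNW hdeg
    have hW1 : 1 ≤ W.card := le_trans (le_trans (le_max_left 1 _) (le_max_right N₁ _)) hNW
    have hWpos : (0:ℝ) < W.card := by exact_mod_cast hW1
    have htau : tauES (p+1) = 1 - 1/((p:ℝ)+1) := tauES_succ p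
    -- degenerate case
    by_cases hdeg_case : 1/((p:ℝ)+1) ≤ ε
    · exfalso
      obtain ⟨v, hv⟩ := Finset.card_pos.mp hW1
      have h1 : ((A v).card : ℝ) ≤ W.card - 1 := by
        have hsubW : A v ⊆ W.erase v := by
          intro x hx
          exact Finset.mem_erase.mpr ⟨fun h => hirr v (h ▸ hx), hsub v hx⟩
        have := Finset.card_le_card hsubW
        rw [Finset.card_erase_of_mem hv] at this
        have : ((A v).card : ℝ) ≤ (W.card - 1 : ℕ) := by exact_mod_cast this
        have h2 : ((W.card - 1 : ℕ) : ℝ) = (W.card : ℝ) - 1 := by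
          have : 1 ≤ W.card := hW1
          push_cast [this]; ring
        linarith [h2 ▸ this]
      have h2 := hdeg v hv
      rw [htau] at h2
      nlinarith
    push_neg at hdeg_case
    set β : ℝ := 1/((p:ℝ)+1) - ε with hβ
    have hβpos : 0 < β := by rw [hβ]; linarith
    have hβlt : β < 1 := by
      rw [hβ]
      have : 1/((p:ℝ)+1) ≤ 1/1 := by
        apply one_div_le_one_div_of_le <;> [norm_num; (linarith [Nat.cast_nonneg (α := ℝ) p])]
      linarith
    -- inner application
    have hdeg' : ∀ v ∈ W, (tauES p + ε'') * W.card ≤ ((A v).card : ℝ) := by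
      intro v hv
      have heq : tauES p + ε'' = tauES (p+1) + ε := by rw [hε''def]; ring
      rw [heq]
      exact hdeg v hv
    obtain ⟨Q, hQsub, hQcard, hQdisj, hQadj⟩ := hES n W A hsub hsymm hirr
      (le_trans (le_max_left N₁ _) hNW) hdeg'
    classical
    -- non-neighbour counting
    set nonnbr : Fin n → Finset (Fin n) := fun q => W.filter (fun v => v ≠ q ∧ v ∉ A q)
      with hnn
    have hnncard : ∀ q ∈ W, ((nonnbr q).card : ℝ) ≤ β * W.card := by
      intro q hq
      have hsubq : insert q (A q) ⊆ W := Finset.insert_subset hq (hsub q)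
      have heq : nonnbr q = W \ insert q (A q) := by
        ext x
        simp only [hnn, Finset.mem_filter, Finset.mem_sdiff, Finset.mem_insert]
        tauto
      have h2 : (A q).card + 1 ≤ W.card := by
        have := Finset.card_le_card hsubq
        rwa [Finset.card_insert_of_notMem (hirr q)] at this
      have hcast : ((nonnbr q).card : ℝ) = (W.card : ℝ) - ((A q).card : ℝ) - 1 := by
        rw [heq, Finset.card_sdiff_of_subset hsubq, Finset.card_insert_of_notMem (hirr q)]
        rw [Nat.cast_sub h2]
        push_cast; ring
      have hAq := hdeg q hq
      rw [htau] at hAq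
      rw [hcast, hβ]
      nlinarith [hAq]
    set B : Finset (Fin n) := W.filter (fun v => ∃ i : Fin (p+1), ((A v ∩ Q i).card < t))
      with hB
    have hlower : B.card * (T - t) ≤ ∑ i : Fin (p+1), ∑ q ∈ Q i, (nonnbr q).card := by
      have hstep1 : ∀ i : Fin (p+1), ∑ q ∈ Q i, (nonnbr q).card
          = ∑ v ∈ W, ((Q i).filter (fun q => v ≠ q ∧ v ∉ A q)).card := by
        intro i
        have h1 : ∀ q, (nonnbr q).card = ∑ v ∈ W, if v ≠ q ∧ v ∉ A q then 1 else 0 := by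
          intro q; rw [hnn]; exact Finset.card_filter _ _
        have h2 : ∀ v, ((Q i).filter (fun q => v ≠ q ∧ v ∉ A q)).card
            = ∑ q ∈ Q i, if v ≠ q ∧ v ∉ A q then 1 else 0 := by
          intro v; exact Finset.card_filter _ _
        simp only [h1, h2]
        exact Finset.sum_comm
      have hstep2 : ∑ i : Fin (p+1), ∑ q ∈ Q i, (nonnbr q).card
          = ∑ v ∈ W, ∑ i : Fin (p+1), ((Q i).filter (fun q => v ≠ q ∧ v ∉ A q)).card := by
        simp only [hstep1]
        exact Finset.sum_comm
      rw [hstep2]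
      have hperv : ∀ v ∈ B, T - t ≤ ∑ i : Fin (p+1), ((Q i).filter (fun q => v ≠ q ∧ v ∉ A q)).card := by
        intro v hv
        rw [hB, Finset.mem_filter] at hv
        obtain ⟨hvW, i, hi⟩ := hv
        have hkey : T - t ≤ ((Q i).filter (fun q => v ≠ q ∧ v ∉ A q)).card := by
          have hss : (Q i \ A v).erase v ⊆ (Q i).filter (fun q => v ≠ q ∧ v ∉ A q) := by
            intro q hq
            rw [Finset.mem_erase, Finset.mem_sdiff] at hq
            obtain ⟨hqv, hqQ, hqA⟩ := hq
            rw [Finset.mem_filter]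
            refine ⟨hqQ, Ne.symm hqv, fun hvA => hqA (hsymm v q hvA)⟩
          have h1 := Finset.card_le_card hss
          have h2 : (Q i \ A v).card + (Q i ∩ A v).card = (Q i).card :=
            Finset.card_sdiff_add_card_inter _ _
          have h3 : (Q i ∩ A v).card = (A v ∩ Q i).card := by rw [Finset.inter_comm]
          have h4 : (Q i \ A v).card - 1 ≤ ((Q i \ A v).erase v).card :=
            Finset.pred_card_le_card_erase
          have h5 := hQcard i
          omega
        calc T - t ≤ ((Q i).filter (fun q => v ≠ q ∧ v ∉ A q)).card := hkey
        _ ≤ ∑ j : Fin (p+1), ((Q j).filter (fun q => v ≠ q ∧ v ∉ A q)).card :=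
            Finset.single_le_sum
              (f := fun j : Fin (p+1) => ((Q j).filter (fun q => v ≠ q ∧ v ∉ A q)).card)
              (fun j _ => Nat.zero_le _) (Finset.mem_univ i)
      calc B.card * (T - t) = ∑ _v ∈ B, (T - t) := by rw [Finset.sum_const, smul_eq_mul]
      _ ≤ ∑ v ∈ B, ∑ i : Fin (p+1), ((Q i).filter (fun q => v ≠ q ∧ v ∉ A q)).card :=
          Finset.sum_le_sum hperv
      _ ≤ ∑ v ∈ W, ∑ i : Fin (p+1), ((Q i).filter (fun q => v ≠ q ∧ v ∉ A q)).card :=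
          Finset.sum_le_sum_of_subset (Finset.filter_subset _ _)
    have hupper : ((∑ i : Fin (p+1), ∑ q ∈ Q i, (nonnbr q).card : ℕ) : ℝ)
        ≤ ((p:ℝ)+1) * T * (β * W.card) := by
      push_cast
      calc ∑ i : Fin (p+1), ∑ q ∈ Q i, ((nonnbr q).card:ℝ)
          ≤ ∑ _i : Fin (p+1), ((T:ℝ) * (β * W.card)) := by
            apply Finset.sum_le_sum
            intro i _
            calc ∑ q ∈ Q i, ((nonnbr q).card:ℝ) ≤ ∑ _q ∈ Q i, β * W.card :=
                  Finset.sum_le_sum (fun q hq => hnncard q (hQsub i hq))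
            _ = (T:ℝ) * (β*W.card) := by
                rw [Finset.sum_const, hQcard i, nsmul_eq_mul]
      _ = ((p:ℝ)+1) * ((T:ℝ) * (β * W.card)) := by
          rw [Finset.sum_const, Finset.card_univ, Fintype.card_fin, nsmul_eq_mul]
          push_cast; ring
      _ = ((p:ℝ)+1) * T * (β*W.card) := by ring
    have hTt0 : (0:ℝ) < (T:ℝ) - t := by
      have : (t:ℝ) + 1 ≤ T := by exact_mod_cast hTt
      linarith
    have hT0 : (0:ℝ) ≤ T := by positivity
    have htR : (0:ℝ) ≤ t := by positivity
    have hconst : ((p:ℝ)+1) * T * β ≤ (1 - ε/2) * ((T:ℝ) - t) := by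
      have hp0 : (0:ℝ) ≤ p := Nat.cast_nonneg p
      have hpb : ((p:ℝ)+1) * β = 1 - ((p:ℝ)+1)*ε := by
        rw [hβ]
        have : (p:ℝ) + 1 ≠ 0 := by linarith
        field_simp
      have hεle : ε ≤ ((p:ℝ)+1)*ε := by nlinarith
      have hTε : 2*(t:ℝ) ≤ (T:ℝ) * ε := by
        rw [div_le_iff₀ hε] at hTbig; linarith
      have hA : ((p:ℝ)+1)*(T:ℝ)*β = (T:ℝ)*(1 - ((p:ℝ)+1)*ε) := by
        rw [mul_comm (((p:ℝ)+1)) (T:ℝ), mul_assoc, hpb]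
      have hB2 : (T:ℝ)*(1 - ((p:ℝ)+1)*ε) ≤ (T:ℝ)*(1-ε) :=
        mul_le_mul_of_nonneg_left (by linarith) hT0
      have hC : (T:ℝ)*(1-ε) ≤ (1 - ε/2) * ((T:ℝ) - t) := by
        have hq : 0 ≤ (t:ℝ) * ε := mul_nonneg htR hε.le
        nlinarith [hq, hTε]
      linarith [hA ▸ le_trans hB2 hC]
    have hBbound : (B.card : ℝ) ≤ (1 - ε/2) * W.card := by
      have h1 : ((B.card * (T - t) : ℕ) : ℝ) ≤ ((p:ℝ)+1) * T * (β * W.card) :=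
        le_trans (by exact_mod_cast hlower) hupper
      have h2 : ((T - t : ℕ):ℝ) = (T:ℝ) - t := by
        rw [Nat.cast_sub (by omega)]
      have h3 : (B.card : ℝ) * ((T:ℝ) - t) ≤ ((p:ℝ)+1) * T * (β * W.card) := by
        rw [← h2]; exact_mod_cast h1
      have h4 : ((p:ℝ)+1) * T * (β * W.card) ≤ ((1 - ε/2) * ((T:ℝ) - t)) * W.card := by
        have := mul_le_mul_of_nonneg_right hconst hWpos.le
        nlinarith [this]
      have h5 : (B.card : ℝ) * ((T:ℝ) - t) ≤ ((1 - ε/2) * W.card) * ((T:ℝ) - t) := by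
        nlinarith [le_trans h3 h4]
      exact le_of_mul_le_mul_right h5 hTt0
    set Good : Finset (Fin n) := W \ B with hGood
    have hGsub : Good ⊆ W := Finset.sdiff_subset
    have hGoodcard : (ε/2) * W.card ≤ (Good.card : ℝ) := by
      have h1 : Good.card = W.card - B.card := Finset.card_sdiff_of_subset (Finset.filter_subset _ W)
      have h2 : B.card ≤ W.card := Finset.card_le_card (Finset.filter_subset _ W)
      have h3 : (Good.card : ℝ) = (W.card:ℝ) - B.card := by
        rw [h1, Nat.cast_sub h2]
      rw [h3]; linarith [hBbound]
    have hGoodprop : ∀ v ∈ Good, ∀ i : Fin (p+1), t ≤ (A v ∩ Q i).card := by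
      intro v hv i
      rw [hGood, Finset.mem_sdiff, hB, Finset.mem_filter] at hv
      by_contra hcon
      push_neg at hcon
      exact hv.2 ⟨hv.1, i, hcon⟩
    -- choose canonical t-subsets
    set σ : Fin n → (Fin (p+1) → Finset (Fin n)) := fun v i =>
      if h : t ≤ ((A v ∩ Q i).card) then (Finset.exists_subset_card_eq h).choose else ∅
      with hσ
    have hσspec : ∀ v ∈ Good, ∀ i, σ v i ⊆ A v ∩ Q i ∧ (σ v i).card = t := by
      intro v hv i
      have ht' : t ≤ (A v ∩ Q i).card := hGoodprop v hv i
      simp only [hσ, dif_pos ht']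
      exact (Finset.exists_subset_card_eq ht').choose_spec
    set piF : Finset (Fin (p+1) → Finset (Fin n)) :=
      Fintype.piFinset (fun i => (Q i).powersetCard t) with hpiF
    have hmaps : ∀ v ∈ Good, σ v ∈ piF := by
      intro v hv
      rw [hpiF, Fintype.mem_piFinset]
      intro i
      rw [Finset.mem_powersetCard]
      exact ⟨(hσspec v hv i).1.trans Finset.inter_subset_right, (hσspec v hv i).2⟩
    have hpicard : piF.card ≤ M := by
      rw [hpiF, Fintype.card_piFinset]
      calc ∏ i : Fin (p+1), ((Q i).powersetCard t).card
          ≤ ∏ _i : Fin (p+1), 2^T := by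
            apply Finset.prod_le_prod'
            intro i _
            calc ((Q i).powersetCard t).card ≤ ((Q i).powerset).card := by
                  apply Finset.card_le_card
                  intro x hx
                  rw [Finset.mem_powerset]
                  exact (Finset.mem_powersetCard.mp hx).1
            _ = 2^T := by rw [Finset.card_powerset, hQcard i]
      _ = (2^T)^(p+1) := by rw [Finset.prod_const, Finset.card_univ, Fintype.card_fin]
      _ = M := by rw [hM, ← pow_mul]
    have hlt : piF.card * t < Good.card := by
      have hWbig : (2*((M*t:ℕ)+1:ℝ))/ε < W.card := by
        have h1 : (⌈(2*((M*t:ℕ)+1:ℝ))/ε⌉₊ + 1 : ℕ) ≤ N := le_trans (le_max_right 1 _) (le_max_right N₁ _)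
        have h2 : (⌈(2*((M*t:ℕ)+1:ℝ))/ε⌉₊ + 1 : ℕ) ≤ W.card := le_trans h1 hNW
        have h3 := Nat.le_ceil ((2*((M*t:ℕ)+1:ℝ))/ε)
        have h4 : ((⌈(2*((M*t:ℕ)+1:ℝ))/ε⌉₊ + 1 : ℕ) : ℝ) ≤ W.card := by exact_mod_cast h2
        push_cast at h3 h4 ⊢
        linarith
      have h5 : ((M*t:ℕ):ℝ) + 1 ≤ (ε/2) * W.card := by
        rw [div_lt_iff₀ hε] at hWbig
        push_cast at hWbig ⊢
        linarith
      have h6 : ((piF.card * t : ℕ):ℝ) < (Good.card : ℝ) := by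
        have h7 : ((piF.card * t : ℕ):ℝ) ≤ ((M*t:ℕ):ℝ) := by
          exact_mod_cast Nat.mul_le_mul_right t hpicard
        linarith [hGoodcard]
      exact_mod_cast h6
    obtain ⟨SS, hSSpi, hfib⟩ := Finset.exists_lt_card_fiber_of_mul_lt_card_of_maps_to hmaps hlt
    obtain ⟨V, hVsub, hVcard⟩ := Finset.exists_subset_card_eq hfib.le
    have hVGood : V ⊆ Good := hVsub.trans (Finset.filter_subset _ _)
    have hVσ : ∀ v ∈ V, σ v = SS := by
      intro v hv
      exact (Finset.mem_filter.mp (hVsub hv)).2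
    have hSSQ : ∀ i, SS i ⊆ Q i ∧ (SS i).card = t := by
      intro i
      rw [hpiF, Fintype.mem_piFinset] at hSSpi
      have := hSSpi i
      rw [Finset.mem_powersetCard] at this
      exact this
    have hSSA : ∀ v ∈ V, ∀ i, SS i ⊆ A v := by
      intro v hv i
      rw [← hVσ v hv]
      exact ((hσspec v (hVGood hv) i).1).trans Finset.inter_subset_left
    refine ⟨Fin.snoc SS V, ?_, ?_, ?_, ?_⟩
    · intro i
      refine Fin.lastCases ?_ ?_ i
      · rw [Fin.snoc_last]
        exact hVGood.trans hGsub
      · intro j; rw [Fin.snoc_castSucc]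
        exact (hSSQ j).1.trans (hQsub j)
    · intro i
      refine Fin.lastCases ?_ ?_ i
      · rw [Fin.snoc_last]; exact hVcard
      · intro j; rw [Fin.snoc_castSucc]; exact (hSSQ j).2
    · intro i j
      refine Fin.lastCases ?_ ?_ i <;> [skip; intro i'] <;>
        (refine Fin.lastCases ?_ ?_ j <;> [skip; intro j'])
      · intro hij; exact absurd rfl hij
      · intro hij
        rw [Fin.snoc_last, Fin.snoc_castSucc]
        rw [Finset.disjoint_left]
        intro x hxV hxS
        have := hSSA x hxV j' hxS
        exact hirr x this
      · intro hij
        rw [Fin.snoc_last, Fin.snoc_castSucc]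
        rw [Finset.disjoint_right]
        intro x hxV hxS
        have := hSSA x hxV i' hxS
        exact hirr x this
      · intro hij
        rw [Fin.snoc_castSucc, Fin.snoc_castSucc]
        have hij' : i' ≠ j' := fun h => hij (by rw [h])
        exact Finset.disjoint_of_subset_left (hSSQ i').1
          (Finset.disjoint_of_subset_right (hSSQ j').1 (hQdisj i' j' hij'))
    · intro i j
      refine Fin.lastCases ?_ ?_ i <;> [skip; intro i'] <;>
        (refine Fin.lastCases ?_ ?_ j <;> [skip; intro j'])
      · intro hij; exact absurd rfl hij
      · intro hij u hu v hv
        rw [Fin.snoc_last] at hu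
        rw [Fin.snoc_castSucc] at hv
        exact hSSA u hu j' hv
      · intro hij u hu v hv
        rw [Fin.snoc_castSucc] at hu
        rw [Fin.snoc_last] at hv
        exact hsymm u v (hSSA v hv i' hu)
      · intro hij u hu v hv
        rw [Fin.snoc_castSucc] at hu hv
        have hij' : i' ≠ j' := fun h => hij (by rw [h])
        exact hQadj i' j' hij' u ((hSSQ i').1 hu) v ((hSSQ j').1 hv)

-- Section 5a : complete multipartite lower bound (r = 2)

lemma multipartite_lower {α : Type*} [DecidableEq α] (F : Finset (Finset α))
    (k : ℕ) (hk : 2 ≤ k)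
    (hnocolor : ¬ ∃ g : α → Fin k, ∀ e ∈ F, ∀ u ∈ e, ∀ v ∈ e, u ≠ v → g u ≠ g v)
    (n : ℕ) (hn : 4 ≤ n) : n - n/k - 1 ≤ coPlusEx 2 n F := by
  classical
  have hkpos : 0 < k := by omega
  set q : ℕ := n / k with hq
  set cmap : Fin n → ℕ := fun v => v.val % k with hcmap
  set Ek : Finset (Finset (Fin n)) :=
    (Finset.univ.powersetCard 2).filter (fun e => (e.image cmap).card = 2) with hEk
  have hEkc : ∀ e ∈ Ek, e.card = 2 := by
    intro e he
    rw [hEk, Finset.mem_filter, Finset.mem_powersetCard] at he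
    exact he.1.2
  -- pair membership criterion
  have hpairmem : ∀ u v : Fin n, u ≠ v → cmap u ≠ cmap v → ({u, v} : Finset (Fin n)) ∈ Ek := by
    intro u v huv hcm
    rw [hEk, Finset.mem_filter, Finset.mem_powersetCard]
    have hc2 : ({u, v} : Finset (Fin n)).card = 2 := by
      rw [Finset.card_insert_of_notMem (by simp [huv]), Finset.card_singleton]
    refine ⟨⟨Finset.subset_univ _, hc2⟩, ?_⟩
    rw [Finset.image_insert, Finset.image_singleton]
    rw [Finset.card_insert_of_notMem (by simp [hcm]), Finset.card_singleton]
  -- class size bound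
  have hclass : ∀ v : Fin n,
      (Finset.univ.filter (fun u : Fin n => cmap u = cmap v)).card ≤ n/k + 1 := by
    intro v
    have := Finset.card_le_card_of_injOn
      (s := Finset.univ.filter (fun u : Fin n => cmap u = cmap v))
      (t := Finset.range (q + 1)) (fun u => u.val / k) ?_ ?_
    · simpa using this
    · intro u hu
      rw [Finset.mem_coe, Finset.mem_range]
      have h1 : u.val ≤ n - 1 := by omega
      have h2 : u.val / k ≤ (n-1)/k := Nat.div_le_div_right h1
      have h3 : (n-1)/k ≤ q := Nat.div_le_div_right (by omega)
      exact Nat.lt_succ_of_le (le_trans h2 h3)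
    · intro u hu u' hu' heq
      simp only [Finset.coe_filter, Set.mem_setOf_eq, hcmap] at hu hu'
      have e1 := Nat.div_add_mod u.val k
      have e2 := Nat.div_add_mod u'.val k
      apply Fin.ext
      have hmods : u.val % k = u'.val % k := by rw [hu.2, hu'.2]
      have heq' : u.val / k = u'.val / k := heq
      calc u.val = k * (u.val / k) + u.val % k := e1.symm
      _ = k * (u'.val / k) + u'.val % k := by rw [hmods, heq']
      _ = u'.val := e2
  -- degree lower bound
  have hdeg : ∀ v : Fin n, n - q - 1 ≤ coDeg Ek {v} := by
    intro v
    have hcount := Finset.card_le_card_of_injOn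
      (s := Finset.univ.filter (fun u : Fin n => ¬ (cmap u = cmap v)))
      (t := Ek.filter (fun e => {v} ⊆ e)) (fun u => {v, u}) ?_ ?_
    · have hsplit := Finset.card_filter_add_card_filter_not
        (s := (Finset.univ : Finset (Fin n))) (p := fun u : Fin n => cmap u = cmap v)
      have h1 := hclass v
      have h2 : (Finset.univ : Finset (Fin n)).card = n := by simp
      unfold coDeg
      omega
    · intro u hu
      rw [Finset.mem_coe, Finset.mem_filter] at hu ⊢
      have hcm : cmap u ≠ cmap v := hu.2
      have huv : u ≠ v := fun h => hcm (by rw [h])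
      constructor
      · have := hpairmem v u (Ne.symm huv) (Ne.symm hcm)
        exact this
      · intro x hx
        rw [Finset.mem_singleton] at hx
        subst hx
        exact Finset.mem_insert_self _ _
    · intro u hu u' hu' heq
      simp only [Finset.coe_filter, Set.mem_setOf_eq] at hu hu'
      have huv : u ≠ v := fun h => hu.2 (by rw [h])
      have hu'v : u' ≠ v := fun h => hu'.2 (by rw [h])
      have heq2 : ({v, u} : Finset (Fin n)) = {v, u'} := heq
      have : u ∈ ({v, u'} : Finset (Fin n)) := by
        rw [← heq2]; exact Finset.mem_insert_of_mem (Finset.mem_singleton_self u)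
      rcases Finset.mem_insert.mp this with h | h
      · exact absurd h huv
      · exact Finset.mem_singleton.mp h
  -- nonempty
  have hv0 : (0:ℕ) < n := by omega
  set v₀ : Fin n := ⟨0, hv0⟩ with hv₀
  set v₁ : Fin n := ⟨1, by omega⟩ with hv₁
  have hEkne : Ek.Nonempty := by
    refine ⟨{v₀, v₁}, hpairmem v₀ v₁ ?_ ?_⟩
    · intro h; have := congrArg Fin.val h; simp [hv₀, hv₁] at this
    · simp only [hcmap, hv₀, hv₁]
      rw [Nat.zero_mod, Nat.mod_eq_of_lt (by omega)]
      omega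
  -- F-freeness
  have hEkfree : ¬ Contains F Ek := by
    rintro ⟨g, ginj, hg⟩
    apply hnocolor
    refine ⟨fun a => ⟨(g a).val % k, Nat.mod_lt _ hkpos⟩, ?_⟩
    intro e heF u hu v hv huv
    have hmemE := hg e heF
    have hcmdiff : cmap (g u) ≠ cmap (g v) := by
      have hcards : (e.image g).card = ((e.image g).image cmap).card := by
        rw [hEk, Finset.mem_filter] at hmemE
        rw [hmemE.2, Finset.card_image_of_injective e ginj]
        have := hEkc _ (hg e heF)
        rw [Finset.card_image_of_injective e ginj] at this
        rw [this]
      have hinj2 : Set.InjOn cmap (e.image g) :=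
        Finset.injOn_of_card_image_eq hcards.symm
      intro hcm
      have : g u = g v := hinj2 (Finset.mem_coe.mpr (Finset.mem_image_of_mem g hu))
        (Finset.mem_coe.mpr (Finset.mem_image_of_mem g hv)) hcm
      exact huv (ginj this)
    intro hfe
    apply hcmdiff
    have := congrArg Fin.val hfe
    simpa [hcmap] using this
  -- min positive codegree
  have hminpos : n - q - 1 ≤ minPosCoDeg 2 n Ek := by
    have hposd : 0 < coDeg Ek {v₀} := by
      have h0 := hdeg v₀
      have hk2 : q ≤ n/2 := by rw [hq]; exact Nat.div_le_div_left hk (by omega)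
      have hn2 : n/2 ≤ n - 2 := by omega
      omega
    unfold minPosCoDeg
    refine le_csInf ⟨coDeg Ek {v₀}, ⟨{v₀}, Finset.card_singleton v₀, rfl, hposd⟩⟩ ?_
    rintro b ⟨S, hScard, rfl, hSpos⟩
    obtain ⟨v, hv⟩ := Finset.card_eq_one.mp hScard
    subst hv
    exact hdeg v
  calc n - q - 1 ≤ minPosCoDeg 2 n Ek := hminpos
  _ ≤ coPlusEx 2 n F := le_coPlusEx (by omega) F Ek hEkc hEkne hEkfree

-- Section 5b : upper bound for r = 2

lemma r2_upper {α : Type*} [Fintype α] [DecidableEq α] (F : Finset (Finset α))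
    (hcard : ∀ e ∈ F, e.card = 2) (k : ℕ) (hk : 1 ≤ k)
    (hcolor : ∃ g : α → Fin (k+1), ∀ e ∈ F, ∀ u ∈ e, ∀ v ∈ e, u ≠ v → g u ≠ g v)
    (ε : ℝ) (hε : 0 < ε) :
    ∃ N₀ : ℕ, ∀ n, N₀ ≤ n → (coPlusEx 2 n F : ℝ) ≤ (1 - 1/(k:ℝ) + ε) * n := by
  classical
  set t := Fintype.card α with htdef
  obtain ⟨NES, hNES1, hES⟩ := erdos_stone k t ε hε
  have htauk : tauES k = 1 - 1/(k:ℝ) := by unfold tauES; rw [if_neg (by omega)]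
  have hcoef : 0 ≤ 1 - 1/(k:ℝ) + ε := by
    have h1 : 1/(k:ℝ) ≤ 1 := by
      apply div_le_one_of_le₀
      · exact_mod_cast hk
      · positivity
    linarith
  refine ⟨⌈(NES:ℝ)/ε⌉₊ + 1, ?_⟩
  intro n hn
  have hnR : (⌈(NES:ℝ)/ε⌉₊ + 1 : ℝ) ≤ n := by exact_mod_cast hn
  have hNESn : (NES : ℝ) < ε * n := by
    have h1 := Nat.le_ceil ((NES:ℝ)/ε)
    have h2 : (NES:ℝ)/ε < n := by linarith
    rw [div_lt_iff₀ hε] at h2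
    linarith
  -- bound every member of the defining set
  have hmem : ∀ d ∈ {d : ℕ | ∃ E : Finset (Finset (Fin n)),
      (∀ e ∈ E, e.card = 2) ∧ E.Nonempty ∧ ¬ Contains F E ∧ minPosCoDeg 2 n E = d},
      (d:ℝ) ≤ (1 - 1/(k:ℝ) + ε) * n := by
    rintro d ⟨E, hEc, hEne, hEfree, hEd⟩
    by_contra hcon
    push_neg at hcon
    -- set up graph
    set W : Finset (Fin n) := Finset.univ.filter (fun v : Fin n => 0 < coDeg E {v}) with hW
    set A : Fin n → Finset (Fin n) :=
      fun v => Finset.univ.filter (fun u => u ≠ v ∧ ({u, v} : Finset (Fin n)) ∈ E) with hA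
    have hAmem : ∀ u v : Fin n, u ∈ A v ↔ (u ≠ v ∧ ({u, v} : Finset (Fin n)) ∈ E) := by
      intro u v
      rw [hA, Finset.mem_filter]
      simp
    have hsub : ∀ v, A v ⊆ W := by
      intro v u hu
      rw [hAmem] at hu
      rw [hW, Finset.mem_filter]
      refine ⟨Finset.mem_univ u, ?_⟩
      rw [coDeg, Finset.card_pos]
      exact ⟨{u, v}, Finset.mem_filter.mpr ⟨hu.2,
        Finset.singleton_subset_iff.mpr (Finset.mem_insert_self u {v})⟩⟩
    have hsymm : ∀ u v : Fin n, u ∈ A v → v ∈ A u := by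
      intro u v hu
      rw [hAmem] at hu ⊢
      exact ⟨Ne.symm hu.1, by rw [Finset.pair_comm]; exact hu.2⟩
    have hirr : ∀ v : Fin n, v ∉ A v := by
      intro v hv
      rw [hAmem] at hv
      exact hv.1 rfl
    -- degrees
    have hdlev : ∀ v ∈ W, d ≤ (A v).card := by
      intro v hv
      rw [hW, Finset.mem_filter] at hv
      have h1 : d ≤ coDeg E {v} := by
        rw [← hEd]
        exact Nat.sInf_le ⟨{v}, by simp, rfl, hv.2⟩
      refine le_trans h1 ?_
      -- injection from edges containing v to neighbours
      unfold coDeg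
      apply Finset.card_le_card_of_injOn
        (f := fun e => if h : (e.erase v).Nonempty then (e.erase v).min' h else v)
      · intro e he
        rw [Finset.mem_coe, Finset.mem_filter, Finset.singleton_subset_iff] at he
        obtain ⟨heE, hve⟩ := he
        have hc2 : e.card = 2 := hEc e heE
        have hc1 : (e.erase v).card = 1 := by rw [Finset.card_erase_of_mem hve, hc2]
        have hne : (e.erase v).Nonempty := Finset.card_pos.mp (by omega)
        simp only [Finset.mem_coe]; rw [dif_pos hne]
        set m := (e.erase v).min' hne with hm
        have hmm : m ∈ e.erase v := Finset.min'_mem _ _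
        obtain ⟨a, ha⟩ := Finset.card_eq_one.mp hc1
        have hma : m = a := by rw [ha] at hmm; exact Finset.mem_singleton.mp hmm
        have hee : e = {m, v} := by
          rw [← Finset.insert_erase hve, ha, hma, Finset.pair_comm]
        rw [hAmem]
        constructor
        · have := Finset.mem_erase.mp hmm
          exact this.1
        · rw [← hee]; exact heE
      · intro e he e' he' heq
        simp only [Finset.coe_filter, Set.mem_setOf_eq, Finset.singleton_subset_iff] at he he'
        obtain ⟨heE, hve⟩ := he
        obtain ⟨heE', hve'⟩ := he'
        have hc1 : (e.erase v).card = 1 := by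
          rw [Finset.card_erase_of_mem hve, hEc e heE]
        have hc1' : (e'.erase v).card = 1 := by
          rw [Finset.card_erase_of_mem hve', hEc e' heE']
        have hne : (e.erase v).Nonempty := Finset.card_pos.mp (by omega)
        have hne' : (e'.erase v).Nonempty := Finset.card_pos.mp (by omega)
        have heq2 : (if h : (e.erase v).Nonempty then (e.erase v).min' h else v)
            = (if h : (e'.erase v).Nonempty then (e'.erase v).min' h else v) := heq
        simp only [dif_pos hne, dif_pos hne'] at heq2
        obtain ⟨a, ha⟩ := Finset.card_eq_one.mp hc1
        obtain ⟨a', ha'⟩ := Finset.card_eq_one.mp hc1'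
        have hma : (e.erase v).min' hne = a := by
          apply Finset.mem_singleton.mp
          rw [← ha]
          exact Finset.min'_mem (e.erase v) hne
        have hma' : (e'.erase v).min' hne' = a' := by
          apply Finset.mem_singleton.mp
          rw [← ha']
          exact Finset.min'_mem (e'.erase v) hne'
        have haa : a = a' := by rw [← hma, ← hma', heq2]
        rw [← Finset.insert_erase hve, ← Finset.insert_erase hve', ha, ha', haa]
    -- W is large
    obtain ⟨e₀, he₀⟩ := hEne
    have he₀c : e₀.card = 2 := hEc e₀ he₀
    obtain ⟨v₀, hv₀⟩ := Finset.card_pos.mp (by omega : 0 < e₀.card)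
    have hv₀W : v₀ ∈ W := by
      rw [hW, Finset.mem_filter]
      refine ⟨Finset.mem_univ _, ?_⟩
      rw [coDeg, Finset.card_pos]
      exact ⟨e₀, Finset.mem_filter.mpr ⟨he₀, Finset.singleton_subset_iff.mpr hv₀⟩⟩
    have hWd : d + 1 ≤ W.card := by
      have h1 : insert v₀ (A v₀) ⊆ W := Finset.insert_subset hv₀W (hsub v₀)
      have h2 := Finset.card_le_card h1
      rw [Finset.card_insert_of_notMem (hirr v₀)] at h2
      have h3 := hdlev v₀ hv₀W
      omega
    have hWn : W.card ≤ n := by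
      have := Finset.card_le_univ W
      simpa using this
    have hdW : (d:ℝ) ≤ W.card := by
      have : (d + 1 : ℕ) ≤ W.card := hWd
      have := (Nat.cast_le (α := ℝ)).mpr this
      push_cast at this
      linarith
    have hWES : NES ≤ W.card := by
      have h1 : (NES:ℝ) < W.card := by
        have h2 : ε * n ≤ (1 - 1/(k:ℝ) + ε) * n := by
          have h3 : (0:ℝ) ≤ 1 - 1/(k:ℝ) := by
            have h4 : 1/(k:ℝ) ≤ 1 := by
              apply div_le_one_of_le₀
              · exact_mod_cast hk
              · positivity
            linarith
          nlinarith [Nat.cast_nonneg (α := ℝ) n]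
        linarith [hNESn, hcon, hdW]
      exact_mod_cast h1.le
    have hdegES : ∀ v ∈ W, (tauES k + ε) * W.card ≤ ((A v).card : ℝ) := by
      intro v hv
      rw [htauk]
      have h1 : (1 - 1/(k:ℝ) + ε) * W.card ≤ (1 - 1/(k:ℝ) + ε) * n := by
        have : (W.card : ℝ) ≤ n := by exact_mod_cast hWn
        nlinarith
      have h2 : (d:ℝ) ≤ (A v).card := by exact_mod_cast hdlev v hv
      linarith [hcon]
    obtain ⟨P, hPsub, hPcard, hPdisj, hPadj⟩ := hES n W A hsub hsymm hirr hWES hdegES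
    -- build a copy of F
    obtain ⟨g, hg⟩ := hcolor
    have hclassle : ∀ i : Fin (k+1),
        (Finset.univ.filter (fun a : α => g a = i)).card ≤ (P i).card := by
      intro i
      rw [hPcard i, htdef]
      exact le_trans (Finset.card_filter_le _ _) (by simp)
    have hembs : ∀ i : Fin (k+1), ∃ φ : {a : α // a ∈ Finset.univ.filter (fun a : α => g a = i)} → Fin n,
        Function.Injective φ ∧ ∀ x, φ x ∈ P i := by
      intro i
      have hle := hclassle i
      refine ⟨fun x => ((P i).equivFin.symm
        (Fin.castLE hle ((Finset.univ.filter (fun a : α => g a = i)).equivFin x))).val,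
        ?_, ?_⟩
      · intro x y hxy
        have h1 := Subtype.ext hxy
        have h2 := (P i).equivFin.symm.injective h1
        have h3 := Fin.castLE_injective hle h2
        exact (Finset.univ.filter (fun a : α => g a = i)).equivFin.injective h3
      · intro x
        exact ((P i).equivFin.symm _).prop
    choose Φ hΦinj hΦmem using hembs
    set Φ' : Fin (k+1) → α → Fin n := fun i a =>
      if h : a ∈ Finset.univ.filter (fun x : α => g x = i) then Φ i ⟨a, h⟩ else v₀ with hΦ'
    set f : α → Fin n := fun a => Φ' (g a) a with hf
    have hfeq : ∀ (i) (a : α) (h : a ∈ Finset.univ.filter (fun x : α => g x = i)),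
        Φ' i a = Φ i ⟨a, h⟩ := by
      intro i a h; simp only [hΦ', dif_pos h]
    have hfmem : ∀ a : α, f a ∈ P (g a) := by
      intro a
      have h : a ∈ Finset.univ.filter (fun x : α => g x = g a) := by simp
      have h2 : f a = Φ' (g a) a := rfl
      rw [h2, hfeq (g a) a h]
      exact hΦmem (g a) _
    have hfinj : Function.Injective f := by
      intro a b hab
      by_cases hgab : g a = g b
      · have hab' : Φ' (g a) a = Φ' (g b) b := hab
        rw [hgab] at hab'
        have ha : a ∈ Finset.univ.filter (fun x : α => g x = g b) := by simp [hgab]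
        have hb : b ∈ Finset.univ.filter (fun x : α => g x = g b) := by simp
        rw [hfeq (g b) a ha, hfeq (g b) b hb] at hab'
        have := hΦinj (g b) hab'
        exact congrArg Subtype.val this
      · exfalso
        have h1 := hfmem a
        have h2 := hfmem b
        rw [hab] at h1
        exact Finset.disjoint_left.mp (hPdisj (g a) (g b) hgab) h1 h2
    have hedges : ∀ e ∈ F, e.image f ∈ E := by
      intro e heF
      obtain ⟨x, y, hxy, hexy⟩ := Finset.card_eq_two.mp (hcard e heF)
      have hgxy : g x ≠ g y := by
        apply hg e heF x (by rw [hexy]; exact Finset.mem_insert_self _ _)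
          y (by rw [hexy]; exact Finset.mem_insert_of_mem (Finset.mem_singleton_self _)) hxy
      have hadj := hPadj (g x) (g y) hgxy (f x) (hfmem x) (f y) (hfmem y)
      rw [hAmem] at hadj
      have : e.image f = {f x, f y} := by
        rw [hexy, Finset.image_insert, Finset.image_singleton]
      rw [this, Finset.pair_comm]
      exact hadj.2
    exact hEfree ⟨f, hfinj, hedges⟩
  -- conclude
  set sp := {d : ℕ | ∃ E : Finset (Finset (Fin n)),
      (∀ e ∈ E, e.card = 2) ∧ E.Nonempty ∧ ¬ Contains F E ∧ minPosCoDeg 2 n E = d} with hsp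
  rcases Set.eq_empty_or_nonempty sp with hemp | hne
  · have : coPlusEx 2 n F = 0 := by unfold coPlusEx; rw [← hsp, hemp]; simp
    rw [this]
    push_cast
    positivity
  · have hmem2 := Nat.sSup_mem hne ⟨n, coPlusEx_mem_le (by omega) F⟩
    have : coPlusEx 2 n F = sSup sp := by unfold coPlusEx; rw [← hsp]
    rw [this]
    exact hmem (sSup sp) hmem2


/-- If `F` is an `r`-graph (`r ≥ 2`) in which every `(r-1)`-set of vertices is contained
in at least one edge, then `lim co⁺ex(n,F)/n` exists. -/
theorem coPlusEx_density_exists {α : Type} [Fintype α] [DecidableEq α]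
    (r : ℕ) (hr : 2 ≤ r) (F : Finset (Finset α)) (hcard : ∀ e ∈ F, e.card = r)
    (hmin : ∀ S : Finset α, S.card = r - 1 → ∃ e ∈ F, S ⊆ e) :
    ∃ L : ℝ, Filter.Tendsto (fun n : ℕ => (coPlusEx r n F : ℝ) / n)
      Filter.atTop (nhds L) := by
  classical
  rcases lt_or_ge (Fintype.card α) (r - 1) with hα | hα₁
  · -- degenerate: α too small, F must be empty, coPlusEx eventually 0
    have hF : F = ∅ := by
      rw [Finset.eq_empty_iff_forall_notMem]
      intro e he
      have h1 : e.card = r := hcard e he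
      have h2 : e.card ≤ Fintype.card α := by
        calc e.card ≤ (Finset.univ : Finset α).card := Finset.card_le_card (Finset.subset_univ e)
        _ = Fintype.card α := Finset.card_univ
      omega
    refine ⟨0, ?_⟩
    apply Filter.Tendsto.congr' ?_ (tendsto_const_nhds (x := (0:ℝ)))
    rw [Filter.EventuallyEq, Filter.eventually_atTop]
    refine ⟨Fintype.card α, ?_⟩
    intro n hn
    have hzero : coPlusEx r n F = 0 := by
      have hset : {d : ℕ | ∃ E : Finset (Finset (Fin n)),
          (∀ e ∈ E, e.card = r) ∧ E.Nonempty ∧ ¬ Contains F E ∧ minPosCoDeg r n E = d} = ∅ := by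
        rw [Set.eq_empty_iff_forall_notMem]
        rintro d ⟨E, -, -, hfree, -⟩
        apply hfree
        have hcle : Fintype.card α ≤ Fintype.card (Fin n) := by
          rw [Fintype.card_fin]; exact hn
        obtain ⟨emb⟩ := Function.Embedding.nonempty_of_card_le hcle
        exact ⟨emb, emb.injective, by rw [hF]; intro e he; exact absurd he (Finset.notMem_empty e)⟩
      unfold coPlusEx
      rw [hset]
      simp
    rw [hzero]
    simp
  rcases eq_or_lt_of_le hα₁ with hα2 | hα3
  · -- |α| = r - 1 : contradiction with hmin
    exfalso
    obtain ⟨e, heF, hsube⟩ := hmin Finset.univ (by rw [Finset.card_univ, ← hα2])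
    have h1 : e.card = r := hcard e heF
    have h2 : (Finset.univ : Finset α).card ≤ e.card := Finset.card_le_card hsube
    have h3 : e.card ≤ (Finset.univ : Finset α).card := Finset.card_le_card (Finset.subset_univ e)
    rw [Finset.card_univ, ← hα2] at h2 h3
    omega
  -- now r ≤ |α|
  have hαr : r ≤ Fintype.card α := by omega
  rcases eq_or_lt_of_le hr with hr2 | hr3
  · -- r = 2
    subst hr2
    have hαpos : 0 < Fintype.card α := by omega
    have hαne : Nonempty α := Fintype.card_pos_iff.mp hαpos
    set Pm : ℕ → Prop := fun m => ∃ g : α → Fin m,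
      ∀ e ∈ F, ∀ u ∈ e, ∀ v ∈ e, u ≠ v → g u ≠ g v with hPm
    have hPcardα : Pm (Fintype.card α) := by
      refine ⟨fun a => (Fintype.equivFin α) a, ?_⟩
      intro e he u hu v hv huv hgg
      exact huv ((Fintype.equivFin α).injective hgg)
    have hsetne : {m : ℕ | Pm m}.Nonempty := ⟨Fintype.card α, hPcardα⟩
    set K : ℕ := sInf {m : ℕ | Pm m} with hK
    have hKmem : Pm K := Nat.sInf_mem hsetne
    -- an edge with two distinct vertices
    obtain ⟨a₀⟩ := hαne
    obtain ⟨e₀, he₀F, -⟩ := hmin {a₀} (Finset.card_singleton a₀)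
    obtain ⟨u₀, hu₀, v₀, hv₀, huv₀⟩ := Finset.one_lt_card.mp
      (by rw [hcard e₀ he₀F]; omega : 1 < e₀.card)
    have hP0 : ¬ Pm 0 := by
      rintro ⟨g, -⟩
      exact (g a₀).elim0
    have hP1 : ¬ Pm 1 := by
      rintro ⟨g, hg⟩
      exact hg e₀ he₀F u₀ hu₀ v₀ hv₀ huv₀ (Subsingleton.elim _ _)
    have hK2 : 2 ≤ K := by
      by_contra hcon
      push_neg at hcon
      interval_cases K
      · exact hP0 hKmem
      · exact hP1 hKmem
    set k : ℕ := K - 1 with hkdef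
    have hk1 : 1 ≤ k := by omega
    have hKk : K = k + 1 := by omega
    have hnocolor : ¬ Pm k := by
      have h : k ∉ {m : ℕ | Pm m} := Nat.notMem_of_lt_sInf (by rw [← hK]; omega)
      exact h
    have hcolor : Pm (k+1) := hKk ▸ hKmem
    refine ⟨1 - 1/(k:ℝ), ?_⟩
    rw [Metric.tendsto_atTop]
    intro ε' hε'
    obtain ⟨N₀, hN₀⟩ := r2_upper F hcard k hk1 hcolor (ε'/2) (by positivity)
    obtain ⟨M₁, hM₁⟩ := exists_nat_gt (2 / ε')
    refine ⟨max (max N₀ 4) (M₁+1), ?_⟩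
    intro n hn
    have hnN₀ : N₀ ≤ n := le_trans (le_trans (le_max_left N₀ 4) (le_max_left _ _)) hn
    have hn4 : 4 ≤ n := le_trans (le_trans (le_max_right N₀ 4) (le_max_left _ _)) hn
    have hnM : M₁ + 1 ≤ n := le_trans (le_max_right _ _) hn
    have hnpos : (0:ℝ) < n := by
      have : (1:ℕ) ≤ n := by omega
      exact_mod_cast Nat.lt_of_lt_of_le Nat.zero_lt_one this
    have hup := hN₀ n hnN₀
    have hupper : (coPlusEx 2 n F : ℝ)/n ≤ (1 - 1/(k:ℝ)) + ε'/2 := by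
      rw [div_le_iff₀ hnpos]
      calc (coPlusEx 2 n F : ℝ) ≤ (1 - 1/(k:ℝ) + ε'/2) * n := hup
      _ = ((1 - 1/(k:ℝ)) + ε'/2) * n := by ring
    have hninv : 1/(n:ℝ) < ε'/2 := by
      rw [div_lt_iff₀ hnpos]
      have h1 : (2:ℝ)/ε' < M₁ := hM₁
      have h2 : (M₁:ℝ) < n := by
        have : (M₁ + 1 : ℕ) ≤ n := hnM
        have := (Nat.cast_le (α := ℝ)).mpr this
        push_cast at this
        linarith
      rw [div_lt_iff₀ hε'] at h1
      nlinarith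
    have hlower : (1 - 1/(k:ℝ)) - ε' < (coPlusEx 2 n F : ℝ)/n := by
      rcases eq_or_lt_of_le hk1 with hk1' | hk2
      · have hkone : (k:ℝ) = 1 := by exact_mod_cast hk1'.symm
        rw [hkone]
        have h0 : (0:ℝ) ≤ (coPlusEx 2 n F : ℝ)/n := by positivity
        norm_num
        linarith
      · have hlow := multipartite_lower F k hk2 hnocolor n hn4
        have hq2 : n/k ≤ n/2 := Nat.div_le_div_left hk2 (by omega)
        have hq3 : n/k + 1 ≤ n := by
          have : n/2 ≤ n - 2 := by omega
          omega
        have hcast : ((n - n/k - 1 : ℕ) : ℝ) = (n:ℝ) - ((n/k : ℕ):ℝ) - 1 := by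
          rw [Nat.sub_sub, Nat.cast_sub (by omega)]
          push_cast
          ring
        have hcast2 : ((n - n/k - 1 : ℕ) : ℝ) ≤ (coPlusEx 2 n F : ℝ) := by
          exact_mod_cast hlow
        have h2 : ((n/k : ℕ) : ℝ) ≤ (n:ℝ)/(k:ℝ) := Nat.cast_div_le
        have hkpos : (0:ℝ) < k := by exact_mod_cast hk1
        have h3 : (n:ℝ) - (n:ℝ)/(k:ℝ) - 1 ≤ (coPlusEx 2 n F : ℝ) := by
          rw [hcast] at hcast2
          linarith
        rw [lt_div_iff₀ hnpos]
        have h5 : (1:ℝ) < (ε'/2) * n := by rwa [div_lt_iff₀ hnpos] at hninv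
        have h6 : (1 - 1/(k:ℝ) - ε') * n = (n:ℝ) - (n:ℝ)/(k:ℝ) - ε' * n := by ring
        rw [h6]
        nlinarith [h3, h5]
    rw [Real.dist_eq, abs_lt]
    constructor <;> linarith
  · -- r ≥ 3
    have hpair : ∀ u v : α, u ≠ v → ∃ e ∈ F, u ∈ e ∧ v ∈ e := by
      intro u v huv
      have hpc : ({u, v} : Finset α).card = 2 := by
        rw [Finset.card_insert_of_notMem (by simp [huv]), Finset.card_singleton]
      obtain ⟨S, hsubS, hScard⟩ := Finset.exists_superset_card_eq
        (show ({u, v} : Finset α).card ≤ r - 1 by omega) (by omega)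
      obtain ⟨e, heF, hSe⟩ := hmin S hScard
      exact ⟨e, heF, hSe (hsubS (Finset.mem_insert_self u {v})),
        hSe (hsubS (Finset.mem_insert_of_mem (Finset.mem_singleton_self v)))⟩
    exact tendsto_of_superlinear (fun n => coPlusEx r n F)
      (fun n => coPlusEx_le (by omega) F)
      (fun n N hn hnN => blowup_superlinear (by omega) F hcard hpair n N hn hnN)
end
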